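/- arXiv:2012.07977 — 4 statements merged into one kernel-verified Lean document; each statement's English description precedes it below -/
import Mathlib

section
/- Let $C_X, C_Y$ be symmetric positive semidefinite $D \times D$ matrices with descending eigenvalues $\mu_1 \geq \cdots \geq \mu_D$ and $\rho_1 \geq \cdots \geq \rho_D$, and fix $1 \leq d \leq D$. If there exists an index $k$ with $1 \leq k \leq D - d + 1$ such that $\gamma < \mu_{d+k-1} / \rho_k$, then the $d$-th largest eigenvalue of $C = C_X - \gamma C_Y$ is positive. -/
open Matrix Finset
open scoped RealInnerProductSpace
variable {D : ℕ}

private lemma inner_repr' (b : OrthonormalBasis (Fin D) ℝ (EuclideanSpace ℝ (Fin D)))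
    (x y : EuclideanSpace ℝ (Fin D)) :
    ⟪x, y⟫ = ∑ i, b.repr x i * b.repr y i := by
  calc ⟪x, y⟫ = ⟪b.repr x, b.repr y⟫ := (b.repr.inner_map_map x y).symm
  _ = ∑ i, b.repr x i * b.repr y i := by
      simp only [PiLp.inner_apply, RCLike.inner_apply, starRingEnd_apply, star_trivial]
      exact Finset.sum_congr rfl fun i _ => mul_comm _ _

private lemma repr_zero_of_mem_span' (b : OrthonormalBasis (Fin D) ℝ (EuclideanSpace ℝ (Fin D)))
    (S : Finset (Fin D)) (x : EuclideanSpace ℝ (Fin D))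
    (hx : x ∈ Submodule.span ℝ (b '' ↑S)) (i : Fin D) (hi : i ∉ S) :
    b.repr x i = 0 := by
  induction hx using Submodule.span_induction with
  | mem y hy =>
      obtain ⟨j, hj, rfl⟩ := hy
      rw [b.repr_self]
      simp only [EuclideanSpace.single_apply]
      rw [if_neg]; rintro rfl; exact hi hj
  | zero => simp
  | add y z _ _ hy hz => simp [hy, hz]
  | smul a y _ hy => simp [hy]

private lemma T'_basis {A : Matrix (Fin D) (Fin D) ℝ} (hA : A.IsHermitian) (j : Fin D) :
    Matrix.toEuclideanLin A (hA.eigenvectorBasis j)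
      = hA.eigenvalues j • hA.eigenvectorBasis j := by
  have := hA.mulVec_eigenvectorBasis j
  ext i
  have h2 := congrFun this i
  simpa [Matrix.toEuclideanLin_apply] using h2

private lemma repr_T' {A : Matrix (Fin D) (Fin D) ℝ} (hA : A.IsHermitian)
    (x : EuclideanSpace ℝ (Fin D)) (i : Fin D) :
    hA.eigenvectorBasis.repr (Matrix.toEuclideanLin A x) i
      = hA.eigenvalues i * hA.eigenvectorBasis.repr x i := by
  have hsym : (Matrix.toEuclideanLin A).IsSymmetric := Matrix.isHermitian_iff_isSymmetric.mp hA
  rw [hA.eigenvectorBasis.repr_apply_apply, hA.eigenvectorBasis.repr_apply_apply,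
    ← hsym (hA.eigenvectorBasis i) x, T'_basis hA i, real_inner_smul_left]

private lemma quad_eq' {A : Matrix (Fin D) (Fin D) ℝ} (hA : A.IsHermitian)
    (x : EuclideanSpace ℝ (Fin D)) :
    ⟪x, Matrix.toEuclideanLin A x⟫
      = ∑ i, hA.eigenvalues i * (hA.eigenvectorBasis.repr x i)^2 := by
  rw [inner_repr' hA.eigenvectorBasis]
  refine Finset.sum_congr rfl fun i _ => ?_
  rw [repr_T']; ring

private lemma norm_sq_repr' (b : OrthonormalBasis (Fin D) ℝ (EuclideanSpace ℝ (Fin D)))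
    (x : EuclideanSpace ℝ (Fin D)) :
    ‖x‖^2 = ∑ i, (b.repr x i)^2 := by
  rw [← real_inner_self_eq_norm_sq, inner_repr' b]
  exact Finset.sum_congr rfl fun i _ => (sq _).symm

private lemma quad_lower' {A : Matrix (Fin D) (Fin D) ℝ} (hA : A.IsHermitian)
    (S : Finset (Fin D)) (c : ℝ) (hc : ∀ i ∈ S, c ≤ hA.eigenvalues i)
    (x : EuclideanSpace ℝ (Fin D))
    (hx : x ∈ Submodule.span ℝ (hA.eigenvectorBasis '' ↑S)) :
    c * ‖x‖^2 ≤ ⟪x, Matrix.toEuclideanLin A x⟫ := by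
  rw [quad_eq' hA, norm_sq_repr' hA.eigenvectorBasis, Finset.mul_sum]
  refine Finset.sum_le_sum fun i _ => ?_
  by_cases hi : i ∈ S
  · exact mul_le_mul_of_nonneg_right (hc i hi) (sq_nonneg _)
  · rw [repr_zero_of_mem_span' _ S x hx i hi]; simp

private lemma quad_upper' {A : Matrix (Fin D) (Fin D) ℝ} (hA : A.IsHermitian)
    (S : Finset (Fin D)) (c : ℝ) (hc : ∀ i ∈ S, hA.eigenvalues i ≤ c)
    (x : EuclideanSpace ℝ (Fin D))
    (hx : x ∈ Submodule.span ℝ (hA.eigenvectorBasis '' ↑S)) :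
    ⟪x, Matrix.toEuclideanLin A x⟫ ≤ c * ‖x‖^2 := by
  rw [quad_eq' hA, norm_sq_repr' hA.eigenvectorBasis, Finset.mul_sum]
  refine Finset.sum_le_sum fun i _ => ?_
  by_cases hi : i ∈ S
  · exact mul_le_mul_of_nonneg_right (hc i hi) (sq_nonneg _)
  · rw [repr_zero_of_mem_span' _ S x hx i hi]; simp

private lemma finrank_span_ortho' (b : OrthonormalBasis (Fin D) ℝ (EuclideanSpace ℝ (Fin D)))
    (S : Finset (Fin D)) :
    Module.finrank ℝ (Submodule.span ℝ (b '' ↑S)) = S.card := by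
  have li : LinearIndependent ℝ (fun i : ↥(↑S : Set (Fin D)) => b ↑i) :=
    (b.orthonormal.comp _ Subtype.val_injective).linearIndependent
  rw [Set.image_eq_range, finrank_span_eq_card li]
  simp

/-- Theorem 2 (Weyl condition): if for some `k` with `d + k < D` (zero-based) one has
`γ < μ_{d+k} / ρ_k`, then the `d`-th largest eigenvalue (zero-based index `d`) of
`C = C_X - γ C_Y` is positive.  Eigenvalues `μ, ρ, lam` are given in descending order. -/
theorem stmt2 {D : ℕ} (CX CY : Matrix (Fin D) (Fin D) ℝ)
    (hX : CX.PosSemidef) (hY : CY.PosSemidef)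
    (γ : ℝ) (hγ : 0 ≤ γ)
    (hCH : (CX - γ • CY).IsHermitian)
    (μ ρ lam : Fin D → ℝ)
    (hμa : Antitone μ) (hρa : Antitone ρ) (hlama : Antitone lam)
    (hμe : ∃ e : Equiv.Perm (Fin D), ∀ i, hX.1.eigenvalues (e i) = μ i)
    (hρe : ∃ e : Equiv.Perm (Fin D), ∀ i, hY.1.eigenvalues (e i) = ρ i)
    (hlame : ∃ e : Equiv.Perm (Fin D), ∀ i, hCH.eigenvalues (e i) = lam i)
    (d : Fin D)
    (hk : ∃ (k : Fin D) (h : (d : ℕ) + (k : ℕ) < D),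
      γ < μ ⟨(d : ℕ) + (k : ℕ), h⟩ / ρ k) :
    0 < lam d := by
  classical
  obtain ⟨e1, he1⟩ := hμe
  obtain ⟨e2, he2⟩ := hρe
  obtain ⟨e3, he3⟩ := hlame
  obtain ⟨k, hdk, hγk⟩ := hk
  set c : ℝ := μ ⟨(d : ℕ) + (k : ℕ), hdk⟩ with hc
  -- ρ k > 0
  have hρ0 : 0 ≤ ρ k := he2 k ▸ hY.eigenvalues_nonneg (e2 k)
  have hρpos : 0 < ρ k := by
    rcases hρ0.lt_or_eq with h | h
    · exact h
    · rw [← h, div_zero] at hγk; linarith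
  have hγρ : γ * ρ k < c := (lt_div_iff₀ hρpos).mp hγk
  by_contra hcon
  push_neg at hcon
  -- the three finsets
  set SX : Finset (Fin D) := Finset.univ.filter (fun i => c ≤ hX.1.eigenvalues i) with hSXdef
  set SY : Finset (Fin D) := Finset.univ.filter (fun i => hY.1.eigenvalues i ≤ ρ k) with hSYdef
  set SC : Finset (Fin D) := Finset.univ.filter (fun i => hCH.eigenvalues i ≤ lam d) with hSCdef
  have hcardX : (d : ℕ) + (k : ℕ) + 1 ≤ SX.card := by
    have hmaps : ∀ i ∈ Finset.Iic (⟨(d : ℕ) + (k : ℕ), hdk⟩ : Fin D), e1 i ∈ SX :=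
      (fun i hi => Finset.mem_filter.mpr ⟨Finset.mem_univ _, by
        rw [he1 i]; exact hμa (Finset.mem_Iic.mp hi)⟩)
    have := Finset.card_le_card_of_injOn e1 hmaps (e1.injective.injOn)
    rwa [Fin.card_Iic] at this
  have hcardY : D - (k : ℕ) ≤ SY.card := by
    have hmaps : ∀ i ∈ Finset.Ici k, e2 i ∈ SY :=
      (fun i hi => Finset.mem_filter.mpr ⟨Finset.mem_univ _, by
        rw [he2 i]; exact hρa (Finset.mem_Ici.mp hi)⟩)
    have := Finset.card_le_card_of_injOn e2 hmaps (e2.injective.injOn)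
    rwa [Fin.card_Ici] at this
  have hcardC : D - (d : ℕ) ≤ SC.card := by
    have hmaps : ∀ i ∈ Finset.Ici d, e3 i ∈ SC :=
      (fun i hi => Finset.mem_filter.mpr ⟨Finset.mem_univ _, by
        rw [he3 i]; exact hlama (Finset.mem_Ici.mp hi)⟩)
    have := Finset.card_le_card_of_injOn e3 hmaps (e3.injective.injOn)
    rwa [Fin.card_Ici] at this
  -- subspaces
  set VX := Submodule.span ℝ (hX.1.eigenvectorBasis '' ↑SX) with hVX
  set VY := Submodule.span ℝ (hY.1.eigenvectorBasis '' ↑SY) with hVY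
  set VC := Submodule.span ℝ (hCH.eigenvectorBasis '' ↑SC) with hVC
  have fX : Module.finrank ℝ VX = SX.card := finrank_span_ortho' _ _
  have fY : Module.finrank ℝ VY = SY.card := finrank_span_ortho' _ _
  have fC : Module.finrank ℝ VC = SC.card := finrank_span_ortho' _ _
  have hDdim : Module.finrank ℝ (EuclideanSpace ℝ (Fin D)) = D := finrank_euclideanSpace_fin
  have h1 : SX.card + SY.card ≤ Module.finrank ℝ ↥(VX ⊓ VY) + D := by
    have hsup := Submodule.finrank_sup_add_finrank_inf_eq VX VY
    have hle : Module.finrank ℝ ↥(VX ⊔ VY) ≤ D := le_trans (Submodule.finrank_le _) hDdim.le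
    omega
  have h2 : Module.finrank ℝ ↥(VX ⊓ VY) + SC.card
      ≤ Module.finrank ℝ ↥(VX ⊓ VY ⊓ VC) + D := by
    have hsup := Submodule.finrank_sup_add_finrank_inf_eq (VX ⊓ VY) VC
    have hle : Module.finrank ℝ ↥((VX ⊓ VY) ⊔ VC) ≤ D := le_trans (Submodule.finrank_le _) hDdim.le
    omega
  have hpos : 0 < Module.finrank ℝ ↥(VX ⊓ VY ⊓ VC) := by
    have hkD : (k : ℕ) < D := k.isLt
    have hdD : (d : ℕ) < D := d.isLt
    omega
  have hne : (VX ⊓ VY ⊓ VC) ≠ ⊥ := by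
    intro h
    rw [h, finrank_bot] at hpos
    exact lt_irrefl 0 hpos
  obtain ⟨x, hxmem, hx0⟩ := Submodule.exists_mem_ne_zero_of_ne_bot hne
  have hxX : x ∈ VX := hxmem.1.1
  have hxY : x ∈ VY := hxmem.1.2
  have hxC : x ∈ VC := hxmem.2
  have hnx : (0:ℝ) < ‖x‖^2 := pow_pos (norm_pos_iff.mpr hx0) 2
  -- quadratic bounds
  have qX : c * ‖x‖^2 ≤ ⟪x, Matrix.toEuclideanLin CX x⟫ :=
    quad_lower' hX.1 SX c (fun i hi => (Finset.mem_filter.mp hi).2) x hxX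
  have qY : ⟪x, Matrix.toEuclideanLin CY x⟫ ≤ ρ k * ‖x‖^2 :=
    quad_upper' hY.1 SY (ρ k) (fun i hi => (Finset.mem_filter.mp hi).2) x hxY
  have qC : ⟪x, Matrix.toEuclideanLin (CX - γ • CY) x⟫ ≤ lam d * ‖x‖^2 :=
    quad_upper' hCH SC (lam d) (fun i hi => (Finset.mem_filter.mp hi).2) x hxC
  have hsplit : ⟪x, Matrix.toEuclideanLin (CX - γ • CY) x⟫
      = ⟪x, Matrix.toEuclideanLin CX x⟫ - γ * ⟪x, Matrix.toEuclideanLin CY x⟫ := by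
    rw [map_sub, _root_.map_smul, LinearMap.sub_apply, LinearMap.smul_apply,
      inner_sub_right, real_inner_smul_right]
  have hYnn : 0 ≤ ⟪x, Matrix.toEuclideanLin CY x⟫ := by
    have := quad_lower' hY.1 SY 0 (fun i _ => hY.eigenvalues_nonneg i) x hxY
    simpa using this
  have hlamnp : lam d * ‖x‖^2 ≤ 0 := mul_nonpos_of_nonpos_of_nonneg hcon (sq_nonneg _)
  nlinarith [mul_le_mul_of_nonneg_left qY hγ, mul_lt_mul_of_pos_right hγρ hnx]
end

section
/- Let $C$ be a symmetric positive definite $D \times D$ matrix with descending eigenvalues $\lambda_1 \geq \cdots \geq \lambda_D > 0$, and fix $c > 0$ and $1 \leq d < D$. Among matrices $A = WW^\top + \sigma^2 I_D$ with $W \in \mathbb{R}^{D\times d}$ and $\sigma^2 > 0$, the function $f(W, \sigma^2) = \frac{c}{2}\log|A| + \frac{1}{2}\operatorname{tr}(A^{-1} C)$ is minimized at $\sigma^{*2} = \frac{1}{c(D-d)}\sum_{i=d+1}^D \lambda_i$ and $W^* = U_d (\Lambda_d/c - \sigma^{*2} I_d)^{1/2} R$, where $U_d$ holds the top $d$ eigenvectors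 of $C$, $\Lambda_d = \operatorname{diag}(\lambda_1,\dots,\lambda_d)$, and $R$ is any $d \times d$ orthogonal matrix, provided $\lambda_d / c > \sigma^{*2}$. -/
open Matrix Finset

/-- Scalar inequality: `(c/2)(1+log(t/c)) ≤ (c/2) log s + t/(2s)`. -/
lemma pcpca_S1 {c t s : ℝ} (hc : 0 < c) (ht : 0 < t) (hs : 0 < s) :
    c / 2 * (1 + Real.log (t / c)) ≤ c / 2 * Real.log s + t / (2 * s) := by
  have hx : 0 < t / (c * s) := by positivity
  have h := Real.log_le_sub_one_of_pos hx
  rw [Real.log_div ht.ne' (by positivity), Real.log_mul hc.ne' hs.ne'] at h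
  have h2 : c / 2 * (Real.log t - (Real.log c + Real.log s))
      ≤ c / 2 * (t / (c * s) - 1) :=
    mul_le_mul_of_nonneg_left h (by positivity)
  have key : c / 2 * (t / (c * s)) = t / (2 * s) := by field_simp
  rw [Real.log_div ht.ne' hc.ne']
  nlinarith [h2, key]

/-- Abel summation bound. -/
lemma pcpca_abel (δ ε : ℕ → ℝ) :
    ∀ n : ℕ, 0 < n →
    (∀ i j, i ≤ j → j < n → δ j ≤ δ i) →
    (∀ k, k ≤ n → ∑ j ∈ Finset.range k, ε j ≤ 0) →
    ∑ j ∈ Finset.range n, δ j * ε j ≤ δ (n - 1) * ∑ j ∈ Finset.range n, ε j := by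
  intro n
  induction n with
  | zero => intro h; omega
  | succ m ih =>
    intro _ hanti hpref
    rcases Nat.eq_zero_or_pos m with hm | hm
    · subst hm; simp
    · have h1 : ∑ j ∈ Finset.range m, δ j * ε j
          ≤ δ (m - 1) * ∑ j ∈ Finset.range m, ε j :=
        ih hm (fun i j hij hj => hanti i j hij (by omega))
          (fun k hk => hpref k (by omega))
      have hTm : ∑ j ∈ Finset.range m, ε j ≤ 0 := hpref m (by omega)
      have h2 : δ (m - 1) * ∑ j ∈ Finset.range m, ε j
          ≤ δ m * ∑ j ∈ Finset.range m, ε j := by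
        apply mul_le_mul_of_nonpos_right _ hTm
        exact hanti (m - 1) m (by omega) (by omega)
      rw [Finset.sum_range_succ, Finset.sum_range_succ]
      have : m + 1 - 1 = m := by omega
      rw [this, mul_add]
      linarith

/-- Converting a filtered `Fin` sum to a `range` sum. -/
lemma pcpca_sum_filter_lt {D : ℕ} (f : Fin D → ℝ) (k : ℕ) (hk : k ≤ D) :
    ∑ j ∈ Finset.univ.filter (fun j : Fin D => (j : ℕ) < k), f j
      = ∑ n ∈ Finset.range k, (fun n => if h : n < D then f ⟨n, h⟩ else 0) n := by
  rw [Finset.sum_filter]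
  have h1 : ∀ j : Fin D, (if (j : ℕ) < k then f j else 0)
      = if (j : ℕ) < k then (if h : (j : ℕ) < D then f ⟨(j : ℕ), h⟩ else 0) else 0 := by
    intro j
    simp only [j.isLt, dif_pos, Fin.eta]
  rw [Finset.sum_congr rfl (fun j _ => h1 j)]
  rw [Fin.sum_univ_eq_sum_range (fun n => if n < k then (if h : n < D then f ⟨n, h⟩ else 0) else 0) D]
  rw [← Finset.sum_subset (Finset.range_subset_range.2 hk)
    (fun x _ hx => by simp only [Finset.mem_range] at hx; rw [if_neg hx])]
  exact Finset.sum_congr rfl (fun x hx => by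
    simp only [Finset.mem_range] at hx; rw [if_pos hx])

/-- Converting a tail-filtered `Fin` sum to an `Ico` sum. -/
lemma pcpca_sum_filter_ge {D : ℕ} (f : Fin D → ℝ) (d : ℕ) :
    ∑ j ∈ Finset.univ.filter (fun j : Fin D => d ≤ (j : ℕ)), f j
      = ∑ n ∈ Finset.Ico d D, (fun n => if h : n < D then f ⟨n, h⟩ else 0) n := by
  rw [Finset.sum_filter]
  have h1 : ∀ j : Fin D, (if d ≤ (j : ℕ) then f j else 0)
      = if d ≤ (j : ℕ) then (if h : (j : ℕ) < D then f ⟨(j : ℕ), h⟩ else 0) else 0 := by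
    intro j; simp only [j.isLt, dif_pos, Fin.eta]
  rw [Finset.sum_congr rfl (fun j _ => h1 j)]
  rw [Fin.sum_univ_eq_sum_range (fun n => if d ≤ n then (if h : n < D then f ⟨n, h⟩ else 0) else 0) D]
  rw [← Finset.sum_filter]
  apply Finset.sum_congr _ (fun x _ => rfl)
  ext x; simp only [Finset.mem_filter, Finset.mem_range, Finset.mem_Ico]; omega

lemma pcpca_card_filter_lt {D : ℕ} (k : ℕ) (hk : k ≤ D) :
    ∑ _j ∈ Finset.univ.filter (fun j : Fin D => (j : ℕ) < k), (1 : ℝ) = k := by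
  rw [pcpca_sum_filter_lt (fun _ => (1 : ℝ)) k hk]
  have h : ∀ x ∈ Finset.range k,
      (fun n => if _h : n < D then (1:ℝ) else 0) x = 1 := by
    intro x hx
    simp only [Finset.mem_range] at hx
    simp only [dif_pos (lt_of_lt_of_le hx hk)]
  rw [Finset.sum_congr rfl h]
  simp

/-- Scalar Ky Fan step: if `0 ≤ β ≤ 1` sums to `k`, then `∑ λ β ≤ ∑_{top k} λ`. -/
lemma pcpca_L1 {D : ℕ} (lam β : Fin D → ℝ) (hanti : Antitone lam)
    (hpos : ∀ i, 0 < lam i) (hβ0 : ∀ m, 0 ≤ β m) (hβ1 : ∀ m, β m ≤ 1)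
    (k : ℕ) (hk : k ≤ D) (hsum : ∑ m, β m = k) :
    ∑ m, lam m * β m ≤ ∑ m ∈ Finset.univ.filter (fun j : Fin D => (j : ℕ) < k), lam m := by
  rcases eq_or_lt_of_le hk with hkD | hkD
  · have huniv : Finset.univ.filter (fun j : Fin D => (j : ℕ) < k) = Finset.univ := by
      ext j
      simp only [Finset.mem_filter, Finset.mem_univ, true_and, iff_true]
      have := j.isLt; omega
    rw [huniv]
    exact Finset.sum_le_sum (fun m _ => by nlinarith [hpos m, hβ1 m, hβ0 m])
  · set K : Fin D := ⟨k, hkD⟩ with hK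
    set S := Finset.univ.filter (fun j : Fin D => (j : ℕ) < k) with hS
    have hsplit : ∑ m, lam m * β m = ∑ m ∈ S, lam m * β m + ∑ m ∈ Sᶜ, lam m * β m :=
      (Finset.sum_add_sum_compl S _).symm
    have h1 : ∑ m ∈ S, (lam m * β m - lam m) ≤ ∑ m ∈ S, lam K * (β m - 1) := by
      apply Finset.sum_le_sum
      intro m hm
      simp only [hS, Finset.mem_filter] at hm
      have hml : lam K ≤ lam m := hanti (Fin.le_def.2 (le_of_lt hm.2))
      nlinarith [hβ1 m]
    have h2 : ∑ m ∈ Sᶜ, lam m * β m ≤ ∑ m ∈ Sᶜ, lam K * β m := by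
      apply Finset.sum_le_sum
      intro m hm
      simp only [hS, Finset.compl_filter, Finset.mem_filter, not_lt] at hm
      have hml : lam m ≤ lam K := hanti (Fin.le_def.2 hm.2)
      nlinarith [hβ0 m]
    have hcard : ∑ _m ∈ S, (1 : ℝ) = k := pcpca_card_filter_lt k hk
    have hβsplit : ∑ m ∈ S, β m + ∑ m ∈ Sᶜ, β m = k := by
      rw [Finset.sum_add_sum_compl]; exact hsum
    have hsum1 : ∑ m ∈ S, (lam m * β m - lam m) = ∑ m ∈ S, lam m * β m - ∑ m ∈ S, lam m :=
      Finset.sum_sub_distrib _ _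
    have hsum2 : ∑ m ∈ S, lam K * (β m - 1) = lam K * (∑ m ∈ S, β m - k) := by
      rw [← Finset.mul_sum, Finset.sum_sub_distrib, hcard]
    have hsum3 : ∑ m ∈ Sᶜ, lam K * β m = lam K * ∑ m ∈ Sᶜ, β m := (Finset.mul_sum _ _ _).symm
    have e1 : lam K * (∑ m ∈ S, β m - (k : ℝ)) + lam K * ∑ m ∈ Sᶜ, β m
        = lam K * (∑ m ∈ S, β m + ∑ m ∈ Sᶜ, β m - (k : ℝ)) := by ring
    rw [hβsplit] at e1
    simp only [sub_self, mul_zero] at e1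
    linarith [h1, h2, hsplit, hsum1, hsum2, hsum3, e1]

/-- The main scalar optimization: lower bound for the PCPCA objective in eigen-coordinates. -/
lemma pcpca_main_scalar (Dn dn : ℕ) (hdD : dn < Dn) (c σ2 σs2 : ℝ)
    (hc : 0 < c) (hσ2 : 0 < σ2) (hσs2 : 0 < σs2)
    (lam γ a : ℕ → ℝ)
    (hlam_pos : ∀ j, j < Dn → 0 < lam j)
    (ha_anti : ∀ i j, i ≤ j → j < Dn → a j ≤ a i)
    (ha_ge : ∀ j, j < Dn → σ2 ≤ a j)
    (ha_tail : ∀ j, dn ≤ j → j < Dn → a j = σ2)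
    (hpref : ∀ k, k ≤ Dn → ∑ j ∈ Finset.range k, γ j ≤ ∑ j ∈ Finset.range k, lam j)
    (htot : ∑ j ∈ Finset.range Dn, γ j = ∑ j ∈ Finset.range Dn, lam j)
    (htail : ∑ j ∈ Finset.Ico dn Dn, lam j = c * ((Dn : ℝ) - dn) * σs2) :
    ∑ j ∈ Finset.range dn, c / 2 * (1 + Real.log (lam j / c))
        + c * ((Dn : ℝ) - dn) / 2 * (1 + Real.log σs2)
      ≤ ∑ j ∈ Finset.range Dn, (c / 2 * Real.log (a j) + γ j / (2 * a j)) := by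
  have ha_pos : ∀ j, j < Dn → 0 < a j := fun j hj => lt_of_lt_of_le hσ2 (ha_ge j hj)
  set δ : ℕ → ℝ := fun j => 1 / σ2 - 1 / a j with hδ
  -- Step 1: Abel bound  ∑ δ (γ - λ) ≤ 0
  have habel : ∑ j ∈ Finset.range Dn, δ j * (γ j - lam j) ≤ 0 := by
    have h := pcpca_abel δ (fun j => γ j - lam j) Dn (by omega)
      (fun i j hij hj => by
        have hai := ha_pos i (lt_of_le_of_lt hij hj)
        have haj := ha_pos j hj
        have := ha_anti i j hij hj
        simp only [hδ]
        have : 1 / a i ≤ 1 / a j := one_div_le_one_div_of_le haj this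
        linarith)
      (fun k hk => by
        rw [Finset.sum_sub_distrib]
        linarith [hpref k hk])
    have h0 : ∑ j ∈ Finset.range Dn, (γ j - lam j) = 0 := by
      rw [Finset.sum_sub_distrib, htot]; ring
    rw [h0, mul_zero] at h
    exact h
  -- Step 2: pointwise identity γ/(2a) = γ/(2σ2) - δγ/2, same for λ
  have hpoint : ∀ (g : ℕ → ℝ) j, j < Dn →
      g j / (2 * a j) = g j / (2 * σ2) - δ j * g j / 2 := by
    intro g j hj
    have haj := (ha_pos j hj).ne'
    simp only [hδ]
    field_simp
    ring
  -- Step 3: ∑ (c/2 log a + γ/(2a)) ≥ ∑ (c/2 log a + λ/(2a))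
  have hstep3 : ∑ j ∈ Finset.range Dn, (c / 2 * Real.log (a j) + lam j / (2 * a j))
      ≤ ∑ j ∈ Finset.range Dn, (c / 2 * Real.log (a j) + γ j / (2 * a j)) := by
    have e1 : ∑ j ∈ Finset.range Dn, (c / 2 * Real.log (a j) + γ j / (2 * a j))
        - ∑ j ∈ Finset.range Dn, (c / 2 * Real.log (a j) + lam j / (2 * a j))
        = ∑ j ∈ Finset.range Dn, (γ j / (2 * a j) - lam j / (2 * a j)) := by
      rw [← Finset.sum_sub_distrib]
      exact Finset.sum_congr rfl (fun j _ => by ring)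
    have e2 : ∀ j ∈ Finset.range Dn,
        γ j / (2 * a j) - lam j / (2 * a j)
        = (γ j - lam j) / (2 * σ2) - δ j * (γ j - lam j) / 2 := by
      intro j hj
      simp only [Finset.mem_range] at hj
      rw [hpoint γ j hj, hpoint lam j hj]
      ring
    have e3 : ∑ j ∈ Finset.range Dn, ((γ j - lam j) / (2 * σ2) - δ j * (γ j - lam j) / 2)
        = (∑ j ∈ Finset.range Dn, (γ j - lam j)) / (2 * σ2)
          - (∑ j ∈ Finset.range Dn, δ j * (γ j - lam j)) / 2 := by
      rw [Finset.sum_sub_distrib, Finset.sum_div, Finset.sum_div]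
    have h0 : ∑ j ∈ Finset.range Dn, (γ j - lam j) = 0 := by
      rw [Finset.sum_sub_distrib, htot]; ring
    have := e1.trans ((Finset.sum_congr rfl e2).trans e3)
    rw [h0] at this
    have : ∑ j ∈ Finset.range Dn, (c / 2 * Real.log (a j) + γ j / (2 * a j))
        - ∑ j ∈ Finset.range Dn, (c / 2 * Real.log (a j) + lam j / (2 * a j))
        = - (∑ j ∈ Finset.range Dn, δ j * (γ j - lam j)) / 2 := by
      rw [this]; ring
    linarith [habel]
  -- Step 4: split the λ-sum and bound each piece
  have hsplit : ∑ j ∈ Finset.range Dn, (c / 2 * Real.log (a j) + lam j / (2 * a j))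
      = ∑ j ∈ Finset.range dn, (c / 2 * Real.log (a j) + lam j / (2 * a j))
        + ∑ j ∈ Finset.Ico dn Dn, (c / 2 * Real.log (a j) + lam j / (2 * a j)) :=
    (Finset.sum_range_add_sum_Ico _ (le_of_lt hdD)).symm
  have hhead : ∑ j ∈ Finset.range dn, c / 2 * (1 + Real.log (lam j / c))
      ≤ ∑ j ∈ Finset.range dn, (c / 2 * Real.log (a j) + lam j / (2 * a j)) := by
    apply Finset.sum_le_sum
    intro j hj
    simp only [Finset.mem_range] at hj
    have hjD : j < Dn := lt_trans hj hdD
    exact pcpca_S1 hc (hlam_pos j hjD) (ha_pos j hjD)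
  have htail2 : c * ((Dn : ℝ) - dn) / 2 * (1 + Real.log σs2)
      ≤ ∑ j ∈ Finset.Ico dn Dn, (c / 2 * Real.log (a j) + lam j / (2 * a j)) := by
    have e4 : ∀ j ∈ Finset.Ico dn Dn,
        c / 2 * Real.log (a j) + lam j / (2 * a j)
        = c / 2 * Real.log σ2 + lam j / (2 * σ2) := by
      intro j hj
      simp only [Finset.mem_Ico] at hj
      rw [ha_tail j hj.1 hj.2]
    rw [Finset.sum_congr rfl e4, Finset.sum_add_distrib, Finset.sum_const,
      ← Finset.sum_div, htail]
    have hcard : (Finset.Ico dn Dn).card = Dn - dn := Nat.card_Ico dn Dn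
    rw [hcard]
    have hDd : (0 : ℝ) < (Dn : ℝ) - dn := by
      have : (dn : ℝ) < Dn := by exact_mod_cast hdD
      linarith
    have hcast : ((Dn - dn : ℕ) : ℝ) = (Dn : ℝ) - dn := by
      rw [Nat.cast_sub (le_of_lt hdD)]
    rw [nsmul_eq_mul, hcast]
    have hS1 := pcpca_S1 (c := c * ((Dn : ℝ) - dn)) (t := c * ((Dn : ℝ) - dn) * σs2)
      (s := σ2) (by positivity) (by positivity) hσ2
    have hdivt : c * ((Dn : ℝ) - dn) * σs2 / (c * ((Dn : ℝ) - dn)) = σs2 := by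
      field_simp
    rw [hdivt] at hS1
    calc c * ((Dn : ℝ) - dn) / 2 * (1 + Real.log σs2)
        ≤ c * ((Dn : ℝ) - dn) / 2 * Real.log σ2 + c * ((Dn : ℝ) - dn) * σs2 / (2 * σ2) := hS1
      _ = ((Dn : ℝ) - dn) * (c / 2 * Real.log σ2) + c * ((Dn : ℝ) - dn) * σs2 / (2 * σ2) := by
          ring
  linarith [hstep3, hsplit ▸ add_le_add hhead htail2]

lemma pcpca_row_orth {D : ℕ} (v : Fin D → Fin D → ℝ)
    (hv : ∀ i j, v i ⬝ᵥ v j = if i = j then (1:ℝ) else 0) :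
    (Matrix.of fun i j => v i j) * (Matrix.of fun i j => v i j)ᵀ = 1 := by
  ext i j
  have := hv i j
  simp only [dotProduct] at this
  simp [Matrix.mul_apply, Matrix.one_apply, this]

lemma pcpca_eigen_conj {D : ℕ} (M : Matrix (Fin D) (Fin D) ℝ) (v : Fin D → Fin D → ℝ)
    (μ : Fin D → ℝ)
    (hv : ∀ i j, v i ⬝ᵥ v j = if i = j then (1:ℝ) else 0)
    (hMv : ∀ i, M *ᵥ v i = μ i • v i) :
    M = (Matrix.of fun i j => v i j)ᵀ * Matrix.diagonal μ * (Matrix.of fun i j => v i j) := by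
  set P := (Matrix.of fun i j => v i j) with hPdef
  have hPPt : P * Pᵀ = 1 := pcpca_row_orth v hv
  have hPtP : Pᵀ * P = 1 := mul_eq_one_comm.mp hPPt
  have hMP : M * Pᵀ = Pᵀ * Matrix.diagonal μ := by
    ext i j
    rw [Matrix.mul_diagonal]
    have h := congrFun (hMv j) i
    simp only [Matrix.mulVec, dotProduct, Pi.smul_apply, smul_eq_mul] at h
    simp only [Matrix.mul_apply, Matrix.transpose_apply, hPdef, Matrix.of_apply]
    rw [h]; ring
  calc M = M * (Pᵀ * P) := by rw [hPtP, Matrix.mul_one]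
    _ = (M * Pᵀ) * P := by rw [Matrix.mul_assoc]
    _ = Pᵀ * Matrix.diagonal μ * P := by rw [hMP]

lemma pcpca_trace_diagonal_mul {D : ℕ} (v : Fin D → ℝ) (M : Matrix (Fin D) (Fin D) ℝ) :
    (Matrix.diagonal v * M).trace = ∑ i, v i * M i i := by
  simp [Matrix.trace, Matrix.diag, Matrix.diagonal_mul]

lemma pcpca_conj_diag_entry {D : ℕ} (P : Matrix (Fin D) (Fin D) ℝ)
    (C : Matrix (Fin D) (Fin D) ℝ) (i : Fin D) :
    (P * C * Pᵀ) i i = (fun k => P i k) ⬝ᵥ (C *ᵥ fun k => P i k) := by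
  simp only [Matrix.mul_apply, Matrix.transpose_apply, dotProduct, Matrix.mulVec,
    Finset.sum_mul, Finset.mul_sum]
  rw [Finset.sum_comm]
  exact Finset.sum_congr rfl fun k _ => Finset.sum_congr rfl fun j _ => by ring

/-- Value of the objective for `A = Pᵀ diag(α) P` with `P` orthogonal. -/
lemma pcpca_value_formula {D : ℕ} (P : Matrix (Fin D) (Fin D) ℝ) (hP : P * Pᵀ = 1)
    (α : Fin D → ℝ) (hα : ∀ i, 0 < α i) (C : Matrix (Fin D) (Fin D) ℝ) (c : ℝ) :
    c / 2 * Real.log (Pᵀ * Matrix.diagonal α * P).det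
      + 1 / 2 * ((Pᵀ * Matrix.diagonal α * P)⁻¹ * C).trace
    = ∑ i, (c / 2 * Real.log (α i) + (P * C * Pᵀ) i i / (2 * α i)) := by
  have hPtP : Pᵀ * P = 1 := mul_eq_one_comm.mp hP
  have hdetP : P.det * P.det = 1 := by
    have h := congrArg Matrix.det hP
    rwa [Matrix.det_mul, Matrix.det_transpose, Matrix.det_one] at h
  have hdet : (Pᵀ * Matrix.diagonal α * P).det = ∏ i, α i := by
    rw [Matrix.det_mul, Matrix.det_mul, Matrix.det_transpose, Matrix.det_diagonal]
    linear_combination (∏ i, α i) * hdetP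
  have hone : (fun i => α i * (α i)⁻¹) = fun _ => (1:ℝ) :=
    funext fun i => mul_inv_cancel₀ (hα i).ne'
  have hinv : (Pᵀ * Matrix.diagonal α * P)⁻¹
      = Pᵀ * Matrix.diagonal (fun i => (α i)⁻¹) * P := by
    apply Matrix.inv_eq_right_inv
    calc (Pᵀ * Matrix.diagonal α * P) * (Pᵀ * Matrix.diagonal (fun i => (α i)⁻¹) * P)
        = Pᵀ * (Matrix.diagonal α * (P * Pᵀ) * Matrix.diagonal (fun i => (α i)⁻¹)) * P := by
          simp only [Matrix.mul_assoc]
      _ = 1 := by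
          rw [hP, Matrix.mul_one, Matrix.diagonal_mul_diagonal, hone,
            Matrix.diagonal_one, Matrix.mul_one, hPtP]
  have htr : ((Pᵀ * Matrix.diagonal α * P)⁻¹ * C).trace
      = ∑ i, (α i)⁻¹ * (P * C * Pᵀ) i i := by
    rw [hinv]
    have e : Pᵀ * Matrix.diagonal (fun i => (α i)⁻¹) * P * C
        = Pᵀ * (Matrix.diagonal (fun i => (α i)⁻¹) * (P * C)) := by
      simp only [Matrix.mul_assoc]
    rw [e, Matrix.trace_mul_comm]
    have e2 : Matrix.diagonal (fun i => (α i)⁻¹) * (P * C) * Pᵀ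
        = Matrix.diagonal (fun i => (α i)⁻¹) * (P * C * Pᵀ) := by
      simp only [Matrix.mul_assoc]
    rw [e2, pcpca_trace_diagonal_mul]
  rw [hdet, htr, Real.log_prod (fun i _ => (hα i).ne')]
  rw [Finset.mul_sum, Finset.mul_sum, ← Finset.sum_add_distrib]
  apply Finset.sum_congr rfl
  intro i _
  have hne := (hα i).ne'
  field_simp

/-- Sorted spectral data for `W * Wᵀ`. -/
lemma pcpca_sorted_spectral {D d : ℕ} (W : Matrix (Fin D) (Fin d) ℝ) :
    ∃ (w : Fin D → ℝ) (p : Fin D → Fin D → ℝ),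
      Antitone w ∧ (∀ i, 0 ≤ w i) ∧ (∀ i : Fin D, d ≤ (i : ℕ) → w i = 0) ∧
      (∀ i j, p i ⬝ᵥ p j = if i = j then (1:ℝ) else 0) ∧
      (∀ i, (W * Wᵀ) *ᵥ p i = w i • p i) := by
  have hpsd : (W * Wᵀ).PosSemidef := by
    have := Matrix.posSemidef_self_mul_conjTranspose W
    rwa [Matrix.conjTranspose_eq_transpose_of_trivial] at this
  have hherm : (W * Wᵀ).IsHermitian := hpsd.isHermitian
  set ev := hherm.eigenvalues with hev
  set τ := Tuple.sort (fun i => - ev i) with hτ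
  have hmono : Monotone ((fun i => - ev i) ∘ τ) := Tuple.monotone_sort _
  refine ⟨fun i => ev (τ i), fun i k => hherm.eigenvectorBasis (τ i) k, ?_, ?_, ?_, ?_, ?_⟩
  · intro i j hij
    have := hmono hij
    simpa using this
  · intro i; exact hpsd.eigenvalues_nonneg (τ i)
  · -- rank argument
    intro i hi
    by_contra hne
    have hpos : 0 < ev (τ i) := lt_of_le_of_ne (hpsd.eigenvalues_nonneg (τ i)) (Ne.symm hne)
    have hrank : (W * Wᵀ).rank ≤ d := by
      calc (W * Wᵀ).rank ≤ W.rank := Matrix.rank_mul_le_left W Wᵀ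
        _ ≤ Fintype.card (Fin d) := Matrix.rank_le_card_width W
        _ = d := Fintype.card_fin d
    have hcard := hherm.rank_eq_card_non_zero_eigs
    have hinj : Function.Injective (fun j : Fin (d+1) =>
        (⟨τ ⟨(j : ℕ), by omega⟩, by
          have hle : (⟨(j : ℕ), by omega⟩ : Fin D) ≤ i := by
            have := j.isLt
            exact Fin.le_def.2 (by simp; omega)
          have hmono2 : ev (τ i) ≤ ev (τ ⟨(j : ℕ), by omega⟩) := by
            have := hmono hle
            simpa using this
          exact ne_of_gt (lt_of_lt_of_le hpos hmono2)⟩ :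
          {k // ev k ≠ 0})) := by
      intro j1 j2 h
      simp only [Subtype.mk_eq_mk] at h
      have h2 := τ.injective h
      have h3 := congrArg Fin.val h2
      simp only at h3
      exact Fin.ext h3
    have := Fintype.card_le_of_injective _ hinj
    rw [Fintype.card_fin, ← hcard] at this
    omega
  · intro i j
    have horth := hherm.eigenvectorBasis.orthonormal
    rw [orthonormal_iff_ite] at horth
    have h := horth (τ i) (τ j)
    rw [PiLp.inner_apply] at h
    simp only [RCLike.inner_apply, starRingEnd_apply, star_trivial] at h
    rw [show (if τ i = τ j then (1:ℝ) else 0) = if i = j then 1 else 0 by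
      by_cases hij : i = j
      · simp [hij]
      · rw [if_neg hij, if_neg (fun hcon => hij (τ.injective hcon))]] at h
    simp only [dotProduct]; rw [← h]; exact Finset.sum_congr rfl fun x _ => mul_comm _ _
  · intro i
    exact hherm.mulVec_eigenvectorBasis (τ i)

/-- Ky Fan prefix inequality. -/
lemma pcpca_kyfan {D : ℕ} (lam : Fin D → ℝ) (hanti : Antitone lam) (hpos : ∀ i, 0 < lam i)
    (G : Matrix (Fin D) (Fin D) ℝ)
    (hrow : ∀ j, ∑ m, (G j m)^2 = (1:ℝ)) (hcol : ∀ m, ∑ j, (G j m)^2 = (1:ℝ))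
    (k : ℕ) (hk : k ≤ D) :
    ∑ j ∈ Finset.univ.filter (fun j : Fin D => (j : ℕ) < k), (∑ m, lam m * (G j m)^2)
      ≤ ∑ j ∈ Finset.univ.filter (fun j : Fin D => (j : ℕ) < k), lam j := by
  set S := Finset.univ.filter (fun j : Fin D => (j : ℕ) < k) with hS
  have hswap : ∑ j ∈ S, ∑ m, lam m * (G j m)^2 = ∑ m, lam m * (∑ j ∈ S, (G j m)^2) := by
    rw [Finset.sum_comm]
    exact Finset.sum_congr rfl fun m _ => (Finset.mul_sum _ _ _).symm
  rw [hswap]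
  apply pcpca_L1 lam (fun m => ∑ j ∈ S, (G j m)^2) hanti hpos
    (fun m => Finset.sum_nonneg fun j _ => sq_nonneg _)
    (fun m => by
      calc ∑ j ∈ S, (G j m)^2 ≤ ∑ j, (G j m)^2 :=
            Finset.sum_le_sum_of_subset_of_nonneg (Finset.subset_univ S)
              (fun j _ _ => sq_nonneg _)
        _ = 1 := hcol m)
    k hk
  calc ∑ m, ∑ j ∈ S, (G j m)^2 = ∑ j ∈ S, ∑ m, (G j m)^2 := Finset.sum_comm
    _ = ∑ _j ∈ S, (1:ℝ) := Finset.sum_congr rfl fun j _ => hrow j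
    _ = k := pcpca_card_filter_lt k hk

/-- The PCPCA maximum relative likelihood solution: `f(W,σ²) = (c/2) log|A| + (1/2) tr(A⁻¹C)`
with `A = WWᵀ + σ²I` is minimized at `σ*² = (∑_{i>d} λᵢ)/(c(D-d))` and
`W* = U_d (Λ_d/c - σ*² I)^{1/2} R`, provided `λ_d / c > σ*²`.  Here `u` is an orthonormal
eigenbasis of the positive definite matrix `C` with descending eigenvalues `lam`. -/
theorem stmt9 {D d : ℕ} (hd : 0 < d) (hdD : d < D)
    (C : Matrix (Fin D) (Fin D) ℝ) (hC : C.PosDef)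
    (lam : Fin D → ℝ) (hmono : Antitone lam) (hpos : ∀ i, 0 < lam i)
    (u : Fin D → Fin D → ℝ)
    (horth : ∀ i j, u i ⬝ᵥ u j = if i = j then (1 : ℝ) else 0)
    (heig : ∀ i, C.mulVec (u i) = lam i • u i)
    (c : ℝ) (hc : 0 < c)
    (σstar2 : ℝ)
    (hσ : σstar2 = (∑ i ∈ Finset.univ.filter fun i : Fin D => d ≤ (i : ℕ), lam i)
      / (c * ((D : ℝ) - d)))
    (hgap : σstar2 < lam ⟨d - 1, by omega⟩ / c)
    (R : Matrix (Fin d) (Fin d) ℝ) (hR : R * Rᵀ = 1)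
    (Wstar : Matrix (Fin D) (Fin d) ℝ)
    (hW : Wstar = (Matrix.of fun (i : Fin D) (j : Fin d) => u (Fin.castLE hdD.le j) i)
      * Matrix.diagonal (fun j : Fin d => Real.sqrt (lam (Fin.castLE hdD.le j) / c - σstar2))
      * R) :
    ∀ (W : Matrix (Fin D) (Fin d) ℝ) (σ2 : ℝ), 0 < σ2 →
      c / 2 * Real.log (Wstar * Wstarᵀ + σstar2 • (1 : Matrix (Fin D) (Fin D) ℝ)).det
          + 1 / 2 * ((Wstar * Wstarᵀ + σstar2 • (1 : Matrix (Fin D) (Fin D) ℝ))⁻¹ * C).trace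
        ≤ c / 2 * Real.log (W * Wᵀ + σ2 • (1 : Matrix (Fin D) (Fin D) ℝ)).det
          + 1 / 2 * ((W * Wᵀ + σ2 • (1 : Matrix (Fin D) (Fin D) ℝ))⁻¹ * C).trace := by
  intro W σ2 hσ2
  classical
  have hDd : (0:ℝ) < (D:ℝ) - (d:ℝ) := by
    have : (d:ℝ) < (D:ℝ) := by exact_mod_cast hdD
    linarith
  have hden : c * ((D:ℝ) - d) ≠ 0 := by positivity
  have hnum_pos : 0 < ∑ i ∈ Finset.univ.filter (fun i : Fin D => d ≤ (i:ℕ)), lam i := by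
    apply Finset.sum_pos (fun i _ => hpos i)
    exact ⟨⟨d, hdD⟩, by simp⟩
  have hσs_pos : 0 < σstar2 := by
    rw [hσ]; positivity
  have htail_sum : ∑ i ∈ Finset.univ.filter (fun i : Fin D => d ≤ (i:ℕ)), lam i
      = c * ((D:ℝ) - d) * σstar2 := by
    rw [hσ]; field_simp
  have hgap' : ∀ i : Fin D, (i:ℕ) < d → σstar2 < lam i / c := by
    intro i hi
    have h1 : lam ⟨d - 1, by omega⟩ ≤ lam i := by
      apply hmono
      exact Fin.le_def.2 (by simp; omega)
    have h2 : lam ⟨d - 1, by omega⟩ / c ≤ lam i / c := by gcongr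
    linarith
  -- the orthogonal matrix from the eigenbasis of C
  set Pu : Matrix (Fin D) (Fin D) ℝ := Matrix.of fun i j => u i j with hPudef
  have hPuPut : Pu * Puᵀ = 1 := pcpca_row_orth u horth
  have hPutPu : Puᵀ * Pu = 1 := mul_eq_one_comm.mp hPuPut
  have hCeq : C = Puᵀ * Matrix.diagonal lam * Pu := pcpca_eigen_conj C u lam horth heig
  have hPuCPut : Pu * C * Puᵀ = Matrix.diagonal lam := by
    rw [hCeq, show Pu * (Puᵀ * Matrix.diagonal lam * Pu) * Puᵀ
        = (Pu * Puᵀ) * Matrix.diagonal lam * (Pu * Puᵀ) by simp only [Matrix.mul_assoc],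
      hPuPut, Matrix.one_mul, Matrix.mul_one]
  -- computation of A* = Wstar Wstarᵀ + σstar2 I
  set E : Matrix (Fin D) (Fin d) ℝ :=
    Matrix.of fun (i : Fin D) (j : Fin d) => u (Fin.castLE hdD.le j) i with hEdef
  set sq : Fin d → ℝ := fun j => lam (Fin.castLE hdD.le j) / c - σstar2 with hsqdef
  have hsq_nonneg : ∀ j : Fin d, 0 ≤ sq j := by
    intro j
    have := hgap' (Fin.castLE hdD.le j) (by simp [Fin.coe_castLE])
    simp only [hsqdef]
    linarith
  have hWW : Wstar * Wstarᵀ = E * Matrix.diagonal sq * Eᵀ := by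
    rw [hW]
    have step1 : (E * Matrix.diagonal
        (fun j : Fin d => Real.sqrt (lam (Fin.castLE hdD.le j) / c - σstar2)) * R)
        * (E * Matrix.diagonal
        (fun j : Fin d => Real.sqrt (lam (Fin.castLE hdD.le j) / c - σstar2)) * R)ᵀ
        = E * (Matrix.diagonal
            (fun j : Fin d => Real.sqrt (lam (Fin.castLE hdD.le j) / c - σstar2))
          * ((R * Rᵀ) * (Matrix.diagonal
            (fun j : Fin d => Real.sqrt (lam (Fin.castLE hdD.le j) / c - σstar2)) * Eᵀ))) := by
      rw [Matrix.transpose_mul, Matrix.transpose_mul, Matrix.diagonal_transpose]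
      simp only [Matrix.mul_assoc]
    rw [step1, hR, Matrix.one_mul,
      ← Matrix.mul_assoc (Matrix.diagonal _) (Matrix.diagonal _) Eᵀ,
      Matrix.diagonal_mul_diagonal, ← Matrix.mul_assoc]
    have hss : (fun j : Fin d => Real.sqrt (lam (Fin.castLE hdD.le j) / c - σstar2)
        * Real.sqrt (lam (Fin.castLE hdD.le j) / c - σstar2)) = sq :=
      funext fun j => Real.mul_self_sqrt (hsq_nonneg j)
    rw [hss]
  set α : Fin D → ℝ := fun i => if (i:ℕ) < d then lam i / c else σstar2 with hαdef
  have hαpos : ∀ i, 0 < α i := by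
    intro i
    simp only [hαdef]
    split
    · exact div_pos (hpos i) hc
    · exact hσs_pos
  have heigAstar : ∀ i, (Wstar * Wstarᵀ + σstar2 • (1 : Matrix (Fin D) (Fin D) ℝ)) *ᵥ u i
      = α i • u i := by
    intro i
    rw [Matrix.add_mulVec, Matrix.smul_mulVec, Matrix.one_mulVec, hWW]
    have hE : Eᵀ *ᵥ u i
        = (fun j : Fin d => if (Fin.castLE hdD.le j : Fin D) = i then (1:ℝ) else 0) := by
      ext j
      have := horth (Fin.castLE hdD.le j) i
      simp only [dotProduct] at this
      simp only [Matrix.mulVec, dotProduct, Matrix.transpose_apply, hEdef, Matrix.of_apply]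
      exact this
    have hmv : (E * Matrix.diagonal sq * Eᵀ) *ᵥ u i
        = E *ᵥ (Matrix.diagonal sq *ᵥ (Eᵀ *ᵥ u i)) := by
      rw [← Matrix.mulVec_mulVec, ← Matrix.mulVec_mulVec]
    by_cases hi : (i:ℕ) < d
    · set i' : Fin d := ⟨(i:ℕ), hi⟩ with hi'def
      have hcast : Fin.castLE hdD.le i' = i := by
        apply Fin.ext; simp [hi'def]
      have hE2 : Eᵀ *ᵥ u i = Pi.single i' 1 := by
        rw [hE]; ext j; rw [Pi.single_apply]
        by_cases hj : j = i'
        · rw [if_pos hj, if_pos (by rw [hj, hcast])]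
        · rw [if_neg hj, if_neg]
          intro hcon
          exact hj (by
            apply Fin.ext
            have := congrArg Fin.val hcon
            simpa [hi'def] using this)
      rw [hmv, hE2, Matrix.diagonal_mulVec_single, Matrix.mulVec_single]
      ext k
      simp only [Pi.add_apply, Pi.smul_apply, smul_eq_mul, hEdef, Matrix.of_apply, hαdef,
        if_pos hi, hcast]
      have hsqi : sq i' = lam i / c - σstar2 := by simp only [hsqdef, hcast]
      rw [hsqi]; simp only [Matrix.col_apply, Matrix.of_apply, op_smul_eq_mul, hcast]; ring
    · have hE0 : Eᵀ *ᵥ u i = 0 := by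
        rw [hE]; ext j; rw [if_neg]
        · rfl
        · intro hcon
          apply hi
          rw [← hcon]
          simp [Fin.coe_castLE, j.isLt]
      rw [hmv, hE0, Matrix.mulVec_zero, Matrix.mulVec_zero]
      simp only [hαdef, if_neg hi]
      rw [zero_add]
  have hAstar : Wstar * Wstarᵀ + σstar2 • (1 : Matrix (Fin D) (Fin D) ℝ)
      = Puᵀ * Matrix.diagonal α * Pu :=
    pcpca_eigen_conj _ u α horth heigAstar
  -- value of the objective at the optimum
  have hLHS : c / 2 * Real.log (Wstar * Wstarᵀ + σstar2 • (1 : Matrix (Fin D) (Fin D) ℝ)).det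
      + 1 / 2 * ((Wstar * Wstarᵀ + σstar2 • (1 : Matrix (Fin D) (Fin D) ℝ))⁻¹ * C).trace
      = ∑ i, (c / 2 * Real.log (α i) + lam i / (2 * α i)) := by
    rw [hAstar, pcpca_value_formula Pu hPuPut α hαpos C c]
    exact Finset.sum_congr rfl fun i _ => by rw [hPuCPut, Matrix.diagonal_apply_eq]
  -- conversion helpers between Fin-sums and ℕ-sums
  have conv_lt : ∀ (f : Fin D → ℝ) (g : ℕ → ℝ), (∀ (n : ℕ) (h : n < D), g n = f ⟨n, h⟩) →
      ∀ (k : ℕ), k ≤ D → ∑ j ∈ Finset.univ.filter (fun j : Fin D => (j:ℕ) < k), f j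
        = ∑ n ∈ Finset.range k, g n := by
    intro f g hg k hk
    rw [pcpca_sum_filter_lt f k hk]
    apply Finset.sum_congr rfl
    intro n hn
    simp only [Finset.mem_range] at hn
    have hnD : n < D := lt_of_lt_of_le hn hk
    show (if h : n < D then f ⟨n, h⟩ else 0) = g n
    rw [dif_pos hnD, hg n hnD]
  have conv_ge : ∀ (f : Fin D → ℝ) (g : ℕ → ℝ), (∀ (n : ℕ) (h : n < D), g n = f ⟨n, h⟩) →
      ∑ j ∈ Finset.univ.filter (fun j : Fin D => d ≤ (j:ℕ)), f j
        = ∑ n ∈ Finset.Ico d D, g n := by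
    intro f g hg
    rw [pcpca_sum_filter_ge f d]
    apply Finset.sum_congr rfl
    intro n hn
    simp only [Finset.mem_Ico] at hn
    show (if h : n < D then f ⟨n, h⟩ else 0) = g n
    rw [dif_pos hn.2, hg n hn.2]
  have hfilD : Finset.univ.filter (fun j : Fin D => (j:ℕ) < D) = Finset.univ := by
    ext j; simp [j.isLt]
  have conv_univ : ∀ (f : Fin D → ℝ) (g : ℕ → ℝ), (∀ (n : ℕ) (h : n < D), g n = f ⟨n, h⟩) →
      ∑ j, f j = ∑ n ∈ Finset.range D, g n := by
    intro f g hg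
    rw [← hfilD]
    exact conv_lt f g hg D le_rfl
  -- ℕ-indexed eigenvalues of C
  set lam' : ℕ → ℝ := fun n => if h : n < D then lam ⟨n, h⟩ else 0 with hlam'def
  have hlam'g : ∀ (n : ℕ) (h : n < D), lam' n = lam ⟨n, h⟩ := by
    intro n h; simp only [hlam'def]; rw [dif_pos h]
  -- the optimum value in closed form
  have hcardR : ∑ _i ∈ Finset.univ.filter (fun i : Fin D => d ≤ (i:ℕ)), (1:ℝ)
      = (D:ℝ) - d := by
    rw [pcpca_sum_filter_ge (fun _ => (1:ℝ)) d]
    rw [Finset.sum_congr rfl (fun n hn => dif_pos (Finset.mem_Ico.1 hn).2)]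
    rw [Finset.sum_const, Nat.card_Ico, nsmul_eq_mul, mul_one,
      Nat.cast_sub (le_of_lt hdD)]
  have hFstar : ∑ i, (c / 2 * Real.log (α i) + lam i / (2 * α i))
      = ∑ j ∈ Finset.range d, c / 2 * (1 + Real.log (lam' j / c))
        + c * ((D:ℝ) - d) / 2 * (1 + Real.log σstar2) := by
    rw [← Finset.sum_filter_add_sum_filter_not Finset.univ (fun i : Fin D => (i:ℕ) < d)]
    have hhead : ∑ i ∈ Finset.univ.filter (fun i : Fin D => (i:ℕ) < d),
        (c / 2 * Real.log (α i) + lam i / (2 * α i))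
        = ∑ j ∈ Finset.range d, c / 2 * (1 + Real.log (lam' j / c)) := by
      have e1 : ∀ i ∈ Finset.univ.filter (fun i : Fin D => (i:ℕ) < d),
          c / 2 * Real.log (α i) + lam i / (2 * α i)
          = c / 2 * (1 + Real.log (lam i / c)) := by
        intro i hi
        simp only [Finset.mem_filter] at hi
        have hαi : α i = lam i / c := by simp only [hαdef]; rw [if_pos hi.2]
        rw [hαi]
        have h1 : lam i / (2 * (lam i / c)) = c / 2 := by
          rw [div_eq_div_iff (mul_pos two_pos (div_pos (hpos i) hc)).ne' (two_ne_zero (α := ℝ))]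
          field_simp
        rw [h1]; ring
      rw [Finset.sum_congr rfl e1]
      exact conv_lt (fun i => c / 2 * (1 + Real.log (lam i / c)))
        (fun n => c / 2 * (1 + Real.log (lam' n / c)))
        (fun n h => by
          show c / 2 * (1 + Real.log (lam' n / c)) = c / 2 * (1 + Real.log (lam ⟨n, h⟩ / c))
          rw [hlam'g n h]) d (le_of_lt hdD)
    have htail2 : ∑ i ∈ Finset.univ.filter (fun i : Fin D => ¬ ((i:ℕ) < d)),
        (c / 2 * Real.log (α i) + lam i / (2 * α i))
        = c * ((D:ℝ) - d) / 2 * (1 + Real.log σstar2) := by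
      have hfil : Finset.univ.filter (fun i : Fin D => ¬ ((i:ℕ) < d))
          = Finset.univ.filter (fun i : Fin D => d ≤ (i:ℕ)) := by
        ext i; simp [not_lt]
      rw [hfil]
      have e2 : ∀ i ∈ Finset.univ.filter (fun i : Fin D => d ≤ (i:ℕ)),
          c / 2 * Real.log (α i) + lam i / (2 * α i)
          = 1 * (c / 2 * Real.log σstar2) + lam i / (2 * σstar2) := by
        intro i hi
        simp only [Finset.mem_filter] at hi
        have hαi : α i = σstar2 := by simp only [hαdef]; rw [if_neg (not_lt.2 hi.2)]
        rw [hαi, one_mul]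
      rw [Finset.sum_congr rfl e2, Finset.sum_add_distrib, ← Finset.sum_mul,
        hcardR, ← Finset.sum_div, htail_sum]
      have hσne : σstar2 ≠ 0 := hσs_pos.ne'
      field_simp
      ring
    rw [hhead, htail2]
  -- spectral analysis of the competitor
  obtain ⟨w, p, hwanti, hw0, hwtail, hporth, heigp⟩ := pcpca_sorted_spectral (d := d) W
  set Pa : Matrix (Fin D) (Fin D) ℝ := Matrix.of fun i j => p i j with hPadef
  have hPaPat : Pa * Paᵀ = 1 := pcpca_row_orth p hporth
  have hPatPa : Paᵀ * Pa = 1 := mul_eq_one_comm.mp hPaPat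
  set a : Fin D → ℝ := fun i => w i + σ2 with hadef
  have hapos : ∀ i, 0 < a i := fun i => by
    have := hw0 i; simp only [hadef]; linarith
  have heigA : ∀ i, (W * Wᵀ + σ2 • (1 : Matrix (Fin D) (Fin D) ℝ)) *ᵥ p i = a i • p i := by
    intro i
    rw [Matrix.add_mulVec, Matrix.smul_mulVec, Matrix.one_mulVec, heigp i]
    simp only [hadef]
    rw [add_smul]
  have hAeq : W * Wᵀ + σ2 • (1 : Matrix (Fin D) (Fin D) ℝ) = Paᵀ * Matrix.diagonal a * Pa :=
    pcpca_eigen_conj _ p a hporth heigA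
  set gam : Fin D → ℝ := fun i => (Pa * C * Paᵀ) i i with hgamdef
  have hRHS : c / 2 * Real.log (W * Wᵀ + σ2 • (1 : Matrix (Fin D) (Fin D) ℝ)).det
      + 1 / 2 * ((W * Wᵀ + σ2 • (1 : Matrix (Fin D) (Fin D) ℝ))⁻¹ * C).trace
      = ∑ i, (c / 2 * Real.log (a i) + gam i / (2 * a i)) := by
    rw [hAeq, pcpca_value_formula Pa hPaPat a hapos C c]
  set G : Matrix (Fin D) (Fin D) ℝ := Pa * Puᵀ with hGdef
  have hGGt : G * Gᵀ = 1 := by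
    rw [hGdef, Matrix.transpose_mul, Matrix.transpose_transpose]
    calc Pa * Puᵀ * (Pu * Paᵀ) = Pa * (Puᵀ * Pu) * Paᵀ := by simp only [Matrix.mul_assoc]
      _ = 1 := by rw [hPutPu, Matrix.mul_one, hPaPat]
  have hGtG : Gᵀ * G = 1 := mul_eq_one_comm.mp hGGt
  have hrow : ∀ j, ∑ m, (G j m)^2 = (1:ℝ) := by
    intro j
    have h := congrFun (congrFun hGGt j) j
    simp only [Matrix.mul_apply, Matrix.transpose_apply, Matrix.one_apply_eq] at h
    rw [← h]
    exact Finset.sum_congr rfl fun m _ => by ring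
  have hcol : ∀ m, ∑ j, (G j m)^2 = (1:ℝ) := by
    intro m
    have h := congrFun (congrFun hGtG m) m
    simp only [Matrix.mul_apply, Matrix.transpose_apply, Matrix.one_apply_eq] at h
    rw [← h]
    exact Finset.sum_congr rfl fun j _ => by ring
  have hGC : Pa * C * Paᵀ = G * Matrix.diagonal lam * Gᵀ := by
    rw [hCeq, hGdef, Matrix.transpose_mul, Matrix.transpose_transpose]
    simp only [Matrix.mul_assoc]
  have hγrep : ∀ j, gam j = ∑ m, lam m * (G j m)^2 := by
    intro j
    have : gam j = (G * Matrix.diagonal lam * Gᵀ) j j := by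
      simp only [hgamdef]; rw [hGC]
    rw [this, Matrix.mul_apply]
    apply Finset.sum_congr rfl
    intro m _
    rw [Matrix.mul_diagonal, Matrix.transpose_apply]
    ring
  have hpref_fin : ∀ k, k ≤ D →
      ∑ j ∈ Finset.univ.filter (fun j : Fin D => (j:ℕ) < k), gam j
      ≤ ∑ j ∈ Finset.univ.filter (fun j : Fin D => (j:ℕ) < k), lam j := by
    intro k hk
    rw [Finset.sum_congr rfl (fun j _ => hγrep j)]
    exact pcpca_kyfan lam hmono hpos G hrow hcol k hk
  have htot_fin : ∑ j, gam j = ∑ j, lam j := by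
    rw [Finset.sum_congr rfl (fun j (_ : j ∈ Finset.univ) => hγrep j), Finset.sum_comm]
    apply Finset.sum_congr rfl
    intro m _
    rw [← Finset.mul_sum, hcol m, mul_one]
  -- ℕ-indexed data for the scalar lemma
  set γ' : ℕ → ℝ := fun n => if h : n < D then gam ⟨n, h⟩ else 0 with hγ'def
  set a' : ℕ → ℝ := fun n => if h : n < D then a ⟨n, h⟩ else σ2 with ha'def
  have hγ'g : ∀ (n : ℕ) (h : n < D), γ' n = gam ⟨n, h⟩ := by
    intro n h; simp only [hγ'def]; rw [dif_pos h]
  have ha'g : ∀ (n : ℕ) (h : n < D), a' n = a ⟨n, h⟩ := by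
    intro n h; simp only [ha'def]; rw [dif_pos h]
  have hmain := pcpca_main_scalar D d hdD c σ2 σstar2 hc hσ2 hσs_pos lam' γ' a'
    (fun j hj => by rw [hlam'g j hj]; exact hpos _)
    (fun i j hij hj => by
      rw [ha'g j hj, ha'g i (lt_of_le_of_lt hij hj)]
      have hw : w ⟨j, hj⟩ ≤ w ⟨i, lt_of_le_of_lt hij hj⟩ := hwanti (Fin.mk_le_mk.2 hij)
      simp only [hadef]; linarith)
    (fun j hj => by
      rw [ha'g j hj]; simp only [hadef]; linarith [hw0 ⟨j, hj⟩])
    (fun j hdj hj => by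
      rw [ha'g j hj]; simp only [hadef]
      rw [hwtail ⟨j, hj⟩ hdj, zero_add])
    (fun k hk => by
      rw [← conv_lt gam γ' hγ'g k hk, ← conv_lt lam lam' hlam'g k hk]
      exact hpref_fin k hk)
    (by
      rw [← conv_univ gam γ' hγ'g, ← conv_univ lam lam' hlam'g]
      exact htot_fin)
    (by
      rw [← conv_ge lam lam' hlam'g]
      exact htail_sum)
  have hconvRHS : ∑ i, (c / 2 * Real.log (a i) + gam i / (2 * a i))
      = ∑ n ∈ Finset.range D, (c / 2 * Real.log (a' n) + γ' n / (2 * a' n)) :=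
    conv_univ _ _ (fun n h => by
      show c / 2 * Real.log (a' n) + γ' n / (2 * a' n)
        = c / 2 * Real.log (a ⟨n, h⟩) + gam ⟨n, h⟩ / (2 * a ⟨n, h⟩)
      rw [ha'g n h, hγ'g n h])
  rw [hLHS, hFstar, hRHS, hconvRHS]
  exact hmain
end

section
/- With $P = \beta N(0, C_F) + (1-\beta) N(0, C_B)$ (foreground/background indicated by $\alpha$), the CPCA loss $l_\theta(u) = (-\gamma)^\alpha x^\top \Delta' x$, and $\Delta = V^* V^{*\top} - V V^\top$, the variance $v(\theta, \theta^*) = \mathbb{E}_P[(l_\theta - l_{\theta^*})^2] - m(\theta,\theta^*)^2$ satisfies $v(\theta,\theta^*) = (\beta - \beta^2)\operatorname{tr}(\Delta C_F)^2 + \gamma^2(\beta-\beta^2)\operatorname{tr}(\Delta C_B)^2 + 2\beta\operatorname{tr}(\Delta C_F \Delta C_F) + 2\gamma^2(1-\beta)\operatorname{tr}(\Delta C_B \Delta C_B) - 2\gamma\beta(1-\beta)\operatorname{tr}(\Delta C_F)\operatorname{tr}(\Delta C_B)$, where $m(\theta,\theta^*) = \beta\operatorname{tr}(\Delta C_F)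 + (1-\beta)\gamma\operatorname{tr}(\Delta C_B)$. -/
open Matrix MeasureTheory ProbabilityTheory

section Aux
open Real
open scoped NNReal ENNReal

set_option linter.unusedSectionVars false
set_option linter.unusedVariables false


lemma integral_x4_exp (b : ℝ) (hb : 0 < b) :
    ∫ x : ℝ, x ^ 4 * Real.exp (-b * x ^ 2)
      = (3 / 4) * Real.sqrt π * b ^ (-(5:ℝ)/2) := by
  have h1 : ∫ x : ℝ, x ^ 4 * Real.exp (-b * x ^ 2)
      = 2 * ∫ x in Set.Ioi (0:ℝ), x ^ 4 * Real.exp (-b * x ^ 2) := by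
    rw [← integral_comp_abs (f := fun x => x ^ 4 * Real.exp (-b * x ^ 2))]
    congr 1; ext x
    rw [pow_abs, abs_of_nonneg (by positivity : (0:ℝ) ≤ x ^ 4), sq_abs]
  rw [h1]
  have h2 : ∫ x in Set.Ioi (0:ℝ), x ^ 4 * Real.exp (-b * x ^ 2)
      = ∫ x in Set.Ioi (0:ℝ), x ^ (4:ℝ) * Real.exp (-b * x ^ (2:ℝ)) := by
    apply setIntegral_congr_fun measurableSet_Ioi
    intro x hx
    beta_reduce
    rw [show x ^ (4:ℝ) = x ^ (4:ℕ) by rw [← Real.rpow_natCast x 4]; norm_num,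
      show x ^ (2:ℝ) = x ^ (2:ℕ) by rw [← Real.rpow_natCast x 2]; norm_num]
  rw [h2, integral_rpow_mul_exp_neg_mul_rpow (by norm_num) (by norm_num) hb]
  have hG : Real.Gamma (((4:ℝ) + 1) / 2) = 3 / 4 * Real.sqrt π := by
    have h52 : ((4:ℝ) + 1) / 2 = 3/2 + 1 := by norm_num
    have h32 : (3/2 : ℝ) = 1/2 + 1 := by norm_num
    rw [h52, Real.Gamma_add_one (by norm_num), h32,
      Real.Gamma_add_one (by norm_num), Real.Gamma_one_half_eq]
    ring
  rw [hG]
  ring_nf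

lemma pdf_mul_x4 (v : ℝ≥0) (hv : v ≠ 0) (x : ℝ) :
    gaussianPDFReal 0 v x * x ^ 4
      = (Real.sqrt (2 * π * v))⁻¹ * (x ^ 4 * Real.exp (-(2 * (v:ℝ))⁻¹ * x ^ 2)) := by
  rw [gaussianPDFReal]
  have : -(x - 0) ^ 2 / (2 * (v:ℝ)) = -(2 * (v:ℝ))⁻¹ * x ^ 2 := by
    rw [sub_zero]; field_simp
  rw [this]; ring

lemma integrable_x4_gaussian (v : ℝ≥0) :
    Integrable (fun x : ℝ => x ^ 4) (gaussianReal 0 v) := by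
  by_cases hv : v = 0
  · rw [hv, gaussianReal_zero_var]
    exact (integrable_const (((0:ℝ)) ^ 4)).congr
      (MeasureTheory.ae_eq_dirac (fun x : ℝ => x ^ 4)).symm
  · have hv' : (0:ℝ) < v := by positivity
    rw [gaussianReal_of_var_ne_zero _ hv]
    have hmeas : Measurable fun x => Real.toNNReal (gaussianPDFReal 0 v x) :=
      (measurable_gaussianPDFReal 0 v).real_toNNReal
    rw [show gaussianPDF 0 v
        = fun x => ((Real.toNNReal (gaussianPDFReal 0 v x) : ℝ≥0) : ℝ≥0∞) from rfl,
      integrable_withDensity_iff_integrable_smul hmeas]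
    have : (fun x : ℝ => (Real.toNNReal (gaussianPDFReal 0 v x)) • (x ^ 4 : ℝ))
        = fun x => (Real.sqrt (2 * π * v))⁻¹ * (x ^ 4 * Real.exp (-(2 * (v:ℝ))⁻¹ * x ^ 2)) := by
      ext x
      rw [NNReal.smul_def, smul_eq_mul, Real.coe_toNNReal _ (gaussianPDFReal_nonneg 0 v x),
        pdf_mul_x4 v hv]
    rw [this]
    refine Integrable.const_mul ?_ _
    have := integrable_rpow_mul_exp_neg_mul_sq (b := (2 * (v:ℝ))⁻¹) (by positivity)
      (s := 4) (by norm_num)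
    refine this.congr ?_
    filter_upwards with x
    rw [show x ^ (4:ℝ) = x ^ (4:ℕ) by rw [← Real.rpow_natCast x 4]; norm_num]

lemma integral_x4_gaussian (v : ℝ≥0) :
    ∫ x, x ^ 4 ∂(gaussianReal 0 v) = 3 * (v:ℝ) ^ 2 := by
  by_cases hv : v = 0
  · rw [hv, gaussianReal_zero_var, integral_dirac]
    norm_num
  · have hv' : (0:ℝ) < v := by positivity
    rw [gaussianReal_of_var_ne_zero _ hv]
    have hmeas : Measurable fun x => Real.toNNReal (gaussianPDFReal 0 v x) :=
      (measurable_gaussianPDFReal 0 v).real_toNNReal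
    rw [show gaussianPDF 0 v
        = fun x => ((Real.toNNReal (gaussianPDFReal 0 v x) : ℝ≥0) : ℝ≥0∞) from rfl,
      integral_withDensity_eq_integral_smul hmeas]
    have hfun : (fun x : ℝ => (Real.toNNReal (gaussianPDFReal 0 v x)) • (x ^ 4 : ℝ))
        = fun x => (Real.sqrt (2 * π * v))⁻¹ * (x ^ 4 * Real.exp (-(2 * (v:ℝ))⁻¹ * x ^ 2)) := by
      ext x
      rw [NNReal.smul_def, smul_eq_mul, Real.coe_toNNReal _ (gaussianPDFReal_nonneg 0 v x),
        pdf_mul_x4 v hv]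
    rw [hfun, integral_const_mul, integral_x4_exp _ (by positivity)]
    have h2v : (0:ℝ) < 2 * (v:ℝ) := by positivity
    have hinv : ((2 * (v:ℝ))⁻¹) ^ (-(5:ℝ)/2) = (2 * (v:ℝ)) ^ ((5:ℝ)/2) := by
      rw [Real.inv_rpow h2v.le, ← Real.rpow_neg h2v.le]
      norm_num
    rw [hinv]
    have h52 : (2*(v:ℝ)) ^ ((5:ℝ)/2) = (2*(v:ℝ))^(2:ℕ) * Real.sqrt (2*(v:ℝ)) := by
      rw [Real.sqrt_eq_rpow, ← Real.rpow_natCast (2*(v:ℝ)) 2, ← Real.rpow_add h2v]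
      norm_num
    have hsplit : Real.sqrt (2*π*(v:ℝ)) = Real.sqrt π * Real.sqrt (2*(v:ℝ)) := by
      rw [show 2*π*(v:ℝ) = π*(2*(v:ℝ)) by ring, Real.sqrt_mul Real.pi_pos.le]
    have hπ : Real.sqrt π ≠ 0 := ne_of_gt (Real.sqrt_pos.mpr Real.pi_pos)
    have h2vs : Real.sqrt (2*(v:ℝ)) ≠ 0 := ne_of_gt (Real.sqrt_pos.mpr h2v)
    have hsq : Real.sqrt (2*(v:ℝ)) * Real.sqrt (2*(v:ℝ)) = 2*(v:ℝ) :=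
      Real.mul_self_sqrt h2v.le
    rw [h52, hsplit]
    field_simp
    nlinarith [hsq]

variable {D : ℕ}

lemma proj_meas (a : Fin D → ℝ) : Measurable fun x : Fin D → ℝ => ∑ i, a i * x i :=
  Finset.measurable_sum _ fun i _ => (measurable_pi_apply i).const_mul _

variable (μ : Measure (Fin D → ℝ)) [IsProbabilityMeasure μ]
  {C : Matrix (Fin D) (Fin D) ℝ}

lemma mom4_int (hC : C.PosSemidef)
    (hG : ∀ v : Fin D → ℝ, μ.map (fun x => ∑ i, v i * x i)
      = gaussianReal 0 (Real.toNNReal (v ⬝ᵥ C.mulVec v)))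
    (a : Fin D → ℝ) : Integrable (fun x => (∑ i, a i * x i) ^ 4) μ := by
  have h := integrable_x4_gaussian (Real.toNNReal (a ⬝ᵥ C.mulVec a))
  rw [← hG a] at h
  exact (integrable_map_measure h.aestronglyMeasurable (proj_meas a).aemeasurable).mp h

lemma mom4_eq (hC : C.PosSemidef)
    (hG : ∀ v : Fin D → ℝ, μ.map (fun x => ∑ i, v i * x i)
      = gaussianReal 0 (Real.toNNReal (v ⬝ᵥ C.mulVec v)))
    (a : Fin D → ℝ) :
    ∫ x, (∑ i, a i * x i) ^ 4 ∂μ = 3 * (a ⬝ᵥ C.mulVec a) ^ 2 := by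
  have h : ∫ x, (∑ i, a i * x i) ^ 4 ∂μ
      = ∫ y, y ^ 4 ∂(μ.map (fun x => ∑ i, a i * x i)) := by
    rw [integral_map (proj_meas a).aemeasurable]
    exact (measurable_id.pow_const 4).aestronglyMeasurable
  rw [h, hG a, integral_x4_gaussian]
  have h0 : 0 ≤ a ⬝ᵥ C.mulVec a := by simpa using hC.dotProduct_mulVec_nonneg a
  rw [Real.coe_toNNReal _ h0]

lemma dot_sym (hC : C.PosSemidef) (a b : Fin D → ℝ) :
    a ⬝ᵥ C.mulVec b = b ⬝ᵥ C.mulVec a := by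
  have hCsym : ∀ i j, C j i = C i j := by
    intro i j
    conv_lhs => rw [← hC.1]
    simp [Matrix.conjTranspose_apply]
  simp only [dotProduct, Matrix.mulVec, Finset.mul_sum]
  rw [Finset.sum_comm]
  refine Finset.sum_congr rfl fun j _ => Finset.sum_congr rfl fun i _ => ?_
  rw [hCsym i j]; ring

lemma sum_add_proj (a b : Fin D → ℝ) (x : Fin D → ℝ) :
    (∑ i, (a i + b i) * x i) = (∑ i, a i * x i) + (∑ i, b i * x i) := by
  rw [← Finset.sum_add_distrib]
  exact Finset.sum_congr rfl fun i _ => by ring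

lemma sum_sub_proj (a b : Fin D → ℝ) (x : Fin D → ℝ) :
    (∑ i, (a i - b i) * x i) = (∑ i, a i * x i) - (∑ i, b i * x i) := by
  rw [← Finset.sum_sub_distrib]
  exact Finset.sum_congr rfl fun i _ => by ring

lemma cross_fun_eq (a b : Fin D → ℝ) :
    (fun x : Fin D → ℝ => (∑ i, a i * x i) ^ 2 * (∑ i, b i * x i) ^ 2)
    = fun x => ((∑ i, (fun i => a i + b i) i * x i) ^ 4
        + (∑ i, (fun i => a i - b i) i * x i) ^ 4
        - 2 * (∑ i, a i * x i) ^ 4 - 2 * (∑ i, b i * x i) ^ 4) / 12 := by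
  funext x
  simp only [sum_add_proj, sum_sub_proj]
  ring

lemma cross_int (hC : C.PosSemidef)
    (hG : ∀ v : Fin D → ℝ, μ.map (fun x => ∑ i, v i * x i)
      = gaussianReal 0 (Real.toNNReal (v ⬝ᵥ C.mulVec v)))
    (a b : Fin D → ℝ) :
    Integrable (fun x => (∑ i, a i * x i) ^ 2 * (∑ i, b i * x i) ^ 2) μ := by
  rw [cross_fun_eq]
  exact ((((mom4_int μ hC hG _).add (mom4_int μ hC hG _)).sub
    ((mom4_int μ hC hG a).const_mul 2)).sub ((mom4_int μ hC hG b).const_mul 2)).div_const 12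

lemma cross_eq (hC : C.PosSemidef)
    (hG : ∀ v : Fin D → ℝ, μ.map (fun x => ∑ i, v i * x i)
      = gaussianReal 0 (Real.toNNReal (v ⬝ᵥ C.mulVec v)))
    (a b : Fin D → ℝ) :
    ∫ x, (∑ i, a i * x i) ^ 2 * (∑ i, b i * x i) ^ 2 ∂μ
      = (a ⬝ᵥ C.mulVec a) * (b ⬝ᵥ C.mulVec b) + 2 * (a ⬝ᵥ C.mulVec b) ^ 2 := by
  rw [cross_fun_eq]
  rw [integral_div]
  have I1 := mom4_int μ hC hG (fun i => a i + b i)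
  have I2 := mom4_int μ hC hG (fun i => a i - b i)
  have I3 : Integrable (fun x => 2 * (∑ i, a i * x i) ^ 4) μ :=
    (mom4_int μ hC hG a).const_mul 2
  have I4 : Integrable (fun x => 2 * (∑ i, b i * x i) ^ 4) μ :=
    (mom4_int μ hC hG b).const_mul 2
  have I12 : Integrable (fun x => (∑ i, (fun i => a i + b i) i * x i) ^ 4
      + (∑ i, (fun i => a i - b i) i * x i) ^ 4) μ := I1.add I2
  have I123 : Integrable (fun x => (∑ i, (fun i => a i + b i) i * x i) ^ 4
      + (∑ i, (fun i => a i - b i) i * x i) ^ 4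
      - 2 * (∑ i, a i * x i) ^ 4) μ := I12.sub I3
  rw [integral_sub I123 I4, integral_sub I12 I3, integral_add I1 I2,
    integral_const_mul, integral_const_mul,
    mom4_eq μ hC hG, mom4_eq μ hC hG, mom4_eq μ hC hG, mom4_eq μ hC hG]
  have hab : ((fun i => a i + b i) : Fin D → ℝ) ⬝ᵥ C.mulVec (fun i => a i + b i)
      = a ⬝ᵥ C.mulVec a + 2 * (a ⬝ᵥ C.mulVec b) + b ⬝ᵥ C.mulVec b := by
    have h1 : (fun i => a i + b i) = a + b := rfl
    rw [h1, Matrix.mulVec_add, dotProduct_add, add_dotProduct, add_dotProduct,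
      dot_sym hC b a]
    ring
  have hsub : ((fun i => a i - b i) : Fin D → ℝ) ⬝ᵥ C.mulVec (fun i => a i - b i)
      = a ⬝ᵥ C.mulVec a - 2 * (a ⬝ᵥ C.mulVec b) + b ⬝ᵥ C.mulVec b := by
    have h1 : (fun i => a i - b i) = a - b := rfl
    rw [h1, Matrix.mulVec_sub, dotProduct_sub, sub_dotProduct, sub_dotProduct,
      dot_sym hC b a]
    ring
  rw [hab, hsub]
  ring

lemma hent_lemma (Δ : Matrix (Fin D) (Fin D) ℝ) (hΔ : Δ.IsHermitian) (i j : Fin D) :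
    Δ i j = ∑ m, ((hΔ.eigenvectorUnitary : Matrix (Fin D) (Fin D) ℝ) i m)
      * hΔ.eigenvalues m * ((hΔ.eigenvectorUnitary : Matrix (Fin D) (Fin D) ℝ) j m) := by
  conv_lhs => rw [hΔ.spectral_theorem]
  rw [Unitary.conjStarAlgAut_apply, Matrix.mul_apply]
  refine Finset.sum_congr rfl fun m _ => ?_
  rw [Matrix.mul_diagonal]
  simp [Matrix.conjTranspose_apply, Matrix.star_eq_conjTranspose]

lemma hquad_lemma (Δ : Matrix (Fin D) (Fin D) ℝ) (hΔ : Δ.IsHermitian) (x : Fin D → ℝ) :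
    x ⬝ᵥ Δ.mulVec x = ∑ m, hΔ.eigenvalues m
      * (∑ i, (hΔ.eigenvectorUnitary : Matrix (Fin D) (Fin D) ℝ) i m * x i) ^ 2 := by
  set U : Matrix (Fin D) (Fin D) ℝ := (hΔ.eigenvectorUnitary : Matrix (Fin D) (Fin D) ℝ)
  set l : Fin D → ℝ := hΔ.eigenvalues
  calc x ⬝ᵥ Δ.mulVec x = ∑ i, ∑ j, x i * (Δ i j * x j) := by
        simp [dotProduct, Matrix.mulVec, Finset.mul_sum]
    _ = ∑ i, ∑ j, ∑ m, x i * (U i m * l m * U j m * x j) := by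
        refine Finset.sum_congr rfl fun i _ => Finset.sum_congr rfl fun j _ => ?_
        rw [hent_lemma Δ hΔ i j, Finset.sum_mul, Finset.mul_sum]
    _ = ∑ i, ∑ m, ∑ j, x i * (U i m * l m * U j m * x j) :=
        Finset.sum_congr rfl fun i _ => Finset.sum_comm
    _ = ∑ m, ∑ i, ∑ j, x i * (U i m * l m * U j m * x j) := Finset.sum_comm
    _ = ∑ m, l m * (∑ i, U i m * x i) ^ 2 := by
        refine Finset.sum_congr rfl fun m _ => ?_
        rw [pow_two, Finset.sum_mul_sum, Finset.mul_sum]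
        refine Finset.sum_congr rfl fun i _ => ?_
        rw [Finset.mul_sum]
        refine Finset.sum_congr rfl fun j _ => ?_
        ring

lemma Qentry (Δ C : Matrix (Fin D) (Fin D) ℝ) (hΔ : Δ.IsHermitian) (m n : Fin D) :
    ((hΔ.eigenvectorUnitary : Matrix (Fin D) (Fin D) ℝ)ᴴ * C
      * (hΔ.eigenvectorUnitary : Matrix (Fin D) (Fin D) ℝ)) m n
    = (fun i => (hΔ.eigenvectorUnitary : Matrix (Fin D) (Fin D) ℝ) i m)
        ⬝ᵥ C.mulVec (fun i => (hΔ.eigenvectorUnitary : Matrix (Fin D) (Fin D) ℝ) i n) := by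
  set U : Matrix (Fin D) (Fin D) ℝ := (hΔ.eigenvectorUnitary : Matrix (Fin D) (Fin D) ℝ)
  simp only [Matrix.mul_apply, Matrix.conjTranspose_apply, dotProduct, Matrix.mulVec,
    Finset.sum_mul, Finset.mul_sum, star_trivial]
  rw [Finset.sum_comm]
  refine Finset.sum_congr rfl fun i _ => Finset.sum_congr rfl fun j _ => ?_
  ring

lemma trace1 (Δ C : Matrix (Fin D) (Fin D) ℝ) (hΔ : Δ.IsHermitian) :
    (Δ * C).trace = ∑ m, hΔ.eigenvalues m
      * ((hΔ.eigenvectorUnitary : Matrix (Fin D) (Fin D) ℝ)ᴴ * C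
          * (hΔ.eigenvectorUnitary : Matrix (Fin D) (Fin D) ℝ)) m m := by
  set U : Matrix (Fin D) (Fin D) ℝ := (hΔ.eigenvectorUnitary : Matrix (Fin D) (Fin D) ℝ)
  set l : Fin D → ℝ := hΔ.eigenvalues
  have hspec : Δ = U * Matrix.diagonal l * Uᴴ := by
    have h := hΔ.spectral_theorem
    simpa [Matrix.star_eq_conjTranspose] using h
  calc (Δ * C).trace = (U * (Matrix.diagonal l * (Uᴴ * C))).trace := by
        rw [hspec]; simp [Matrix.mul_assoc]
    _ = ((Matrix.diagonal l * (Uᴴ * C)) * U).trace := Matrix.trace_mul_comm _ _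
    _ = (Matrix.diagonal l * (Uᴴ * C * U)).trace := by simp [Matrix.mul_assoc]
    _ = ∑ m, l m * (Uᴴ * C * U) m m := by
        simp [Matrix.trace, Matrix.diag, Matrix.diagonal_mul]

lemma trace2 (Δ C : Matrix (Fin D) (Fin D) ℝ) (hΔ : Δ.IsHermitian) :
    (Δ * C * (Δ * C)).trace = ∑ m, ∑ n, hΔ.eigenvalues m * hΔ.eigenvalues n
      * (((hΔ.eigenvectorUnitary : Matrix (Fin D) (Fin D) ℝ)ᴴ * C
          * (hΔ.eigenvectorUnitary : Matrix (Fin D) (Fin D) ℝ)) m n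
        * ((hΔ.eigenvectorUnitary : Matrix (Fin D) (Fin D) ℝ)ᴴ * C
          * (hΔ.eigenvectorUnitary : Matrix (Fin D) (Fin D) ℝ)) n m) := by
  set U : Matrix (Fin D) (Fin D) ℝ := (hΔ.eigenvectorUnitary : Matrix (Fin D) (Fin D) ℝ)
  set l : Fin D → ℝ := hΔ.eigenvalues
  have hspec : Δ = U * Matrix.diagonal l * Uᴴ := by
    have h := hΔ.spectral_theorem
    simpa [Matrix.star_eq_conjTranspose] using h
  calc (Δ * C * (Δ * C)).trace
      = (U * (Matrix.diagonal l * (Uᴴ * (C * (U * (Matrix.diagonal l * (Uᴴ * C))))))).trace := by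
        rw [hspec]; simp [Matrix.mul_assoc]
    _ = ((Matrix.diagonal l * (Uᴴ * (C * (U * (Matrix.diagonal l * (Uᴴ * C)))))) * U).trace :=
        Matrix.trace_mul_comm _ _
    _ = (Matrix.diagonal l * (Uᴴ * C * U) * (Matrix.diagonal l * (Uᴴ * C * U))).trace := by
        simp [Matrix.mul_assoc]
    _ = ∑ m, ∑ n, l m * l n * ((Uᴴ * C * U) m n * (Uᴴ * C * U) n m) := by
        simp only [Matrix.trace, Matrix.diag]
        refine Finset.sum_congr rfl fun m _ => ?_
        rw [Matrix.mul_apply]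
        refine Finset.sum_congr rfl fun n _ => ?_
        rw [Matrix.diagonal_mul, Matrix.diagonal_mul]
        ring

lemma quad_sq_integral (hC : C.PosSemidef)
    (hG : ∀ v : Fin D → ℝ, μ.map (fun x => ∑ i, v i * x i)
      = gaussianReal 0 (Real.toNNReal (v ⬝ᵥ C.mulVec v)))
    (Δ : Matrix (Fin D) (Fin D) ℝ) (hΔ : Δ.IsHermitian) :
    ∫ x, (x ⬝ᵥ Δ.mulVec x) ^ 2 ∂μ
      = (Δ * C).trace ^ 2 + 2 * (Δ * C * (Δ * C)).trace := by
  set U : Matrix (Fin D) (Fin D) ℝ := (hΔ.eigenvectorUnitary : Matrix (Fin D) (Fin D) ℝ) with hUdef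
  set l : Fin D → ℝ := hΔ.eigenvalues with hldef
  have h1 : ∀ x : Fin D → ℝ, (x ⬝ᵥ Δ.mulVec x) ^ 2
      = ∑ m, ∑ n, (l m * l n)
        * ((∑ i, U i m * x i) ^ 2 * (∑ i, U i n * x i) ^ 2) := by
    intro x
    rw [hquad_lemma Δ hΔ x, pow_two, Finset.sum_mul_sum]
    exact Finset.sum_congr rfl fun m _ => Finset.sum_congr rfl fun n _ => by ring
  simp only [h1]
  have Iterm : ∀ m n : Fin D, Integrable (fun x => (l m * l n)
      * ((∑ i, U i m * x i) ^ 2 * (∑ i, U i n * x i) ^ 2)) μ :=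
    fun m n => (cross_int μ hC hG _ _).const_mul _
  rw [integral_finset_sum _ (fun m _ => integrable_finset_sum _ (fun n _ => Iterm m n))]
  have h2 : ∀ m : Fin D, ∫ x, ∑ n, (l m * l n)
      * ((∑ i, U i m * x i) ^ 2 * (∑ i, U i n * x i) ^ 2) ∂μ
      = ∑ n, (l m * l n) * (((fun i => U i m) ⬝ᵥ C.mulVec (fun i => U i m))
          * ((fun i => U i n) ⬝ᵥ C.mulVec (fun i => U i n))
        + 2 * ((fun i => U i m) ⬝ᵥ C.mulVec (fun i => U i n)) ^ 2) := by
    intro m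
    rw [integral_finset_sum _ (fun n _ => Iterm m n)]
    refine Finset.sum_congr rfl fun n _ => ?_
    rw [integral_const_mul, cross_eq μ hC hG]
  simp only [h2]
  rw [trace1 Δ C hΔ, trace2 Δ C hΔ]
  simp only [Qentry Δ C hΔ]
  have hq : ∀ m n : Fin D, ((fun i => U i n) ⬝ᵥ C.mulVec (fun i => U i m))
      = ((fun i => U i m) ⬝ᵥ C.mulVec (fun i => U i n)) := fun m n => dot_sym hC _ _
  rw [pow_two, Finset.sum_mul_sum, Finset.mul_sum, ← Finset.sum_add_distrib]
  refine Finset.sum_congr rfl fun m _ => ?_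
  rw [Finset.mul_sum, ← Finset.sum_add_distrib]
  refine Finset.sum_congr rfl fun n _ => ?_
  rw [hq m n]
  ring

end Aux


/-- The Gibbs-posterior variance term for CPCA under the Gaussian mixture
`P = β N(0,C_F) + (1-β) N(0,C_B)`:  with `Δ = V*V*ᵀ - VVᵀ`,
`v(θ,θ*) = E_P[(l_θ - l_{θ*})²] - m(θ,θ*)²` equals
`(β-β²)tr(ΔC_F)² + γ²(β-β²)tr(ΔC_B)² + 2β tr(ΔC_FΔC_F) + 2γ²(1-β)tr(ΔC_BΔC_B)
  - 2γβ(1-β)tr(ΔC_F)tr(ΔC_B)`, where `m = β tr(ΔC_F) + (1-β)γ tr(ΔC_B)`. -/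
theorem stmt13 {D d : ℕ} (β γ : ℝ) (hβ0 : 0 < β) (hβ1 : β < 1) (hγ : 0 ≤ γ)
    (CF CB : Matrix (Fin D) (Fin D) ℝ) (hCF : CF.PosSemidef) (hCB : CB.PosSemidef)
    (μF μB : Measure (Fin D → ℝ))
    [IsProbabilityMeasure μF] [IsProbabilityMeasure μB]
    (hGaussF : ∀ v : Fin D → ℝ,
      μF.map (fun x => ∑ i, v i * x i)
        = gaussianReal 0 (Real.toNNReal (v ⬝ᵥ CF.mulVec v)))
    (hGaussB : ∀ v : Fin D → ℝ,
      μB.map (fun x => ∑ i, v i * x i)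
        = gaussianReal 0 (Real.toNNReal (v ⬝ᵥ CB.mulVec v)))
    (V Vstar : Matrix (Fin D) (Fin d) ℝ)
    (hV : Vᵀ * V = 1) (hVstar : Vstarᵀ * Vstar = 1)
    (Δ : Matrix (Fin D) (Fin D) ℝ) (hΔ : Δ = Vstar * Vstarᵀ - V * Vᵀ) :
    (β * ∫ x, (x ⬝ᵥ Δ.mulVec x) ^ 2 ∂μF
        + (1 - β) * γ ^ 2 * ∫ x, (x ⬝ᵥ Δ.mulVec x) ^ 2 ∂μB)
      - (β * (Δ * CF).trace + (1 - β) * γ * (Δ * CB).trace) ^ 2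
    = (β - β ^ 2) * (Δ * CF).trace ^ 2
      + γ ^ 2 * (β - β ^ 2) * (Δ * CB).trace ^ 2
      + 2 * β * (Δ * CF * (Δ * CF)).trace
      + 2 * γ ^ 2 * (1 - β) * (Δ * CB * (Δ * CB)).trace
      - 2 * γ * β * (1 - β) * (Δ * CF).trace * (Δ * CB).trace := by
  have hsymm : ∀ i j, Δ j i = Δ i j := by
    intro i j
    rw [hΔ]
    simp only [Matrix.sub_apply, Matrix.mul_apply, Matrix.transpose_apply]
    rw [Finset.sum_congr rfl (fun k _ => mul_comm (Vstar j k) (Vstar i k)),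
      Finset.sum_congr rfl (fun k _ => mul_comm (V j k) (V i k))]
  have hΔH : Δ.IsHermitian := by
    show Δᴴ = Δ
    ext i j
    simp only [Matrix.conjTranspose_apply, star_trivial]
    exact hsymm i j
  rw [quad_sq_integral μF hCF hGaussF Δ hΔH, quad_sq_integral μB hCB hGaussB Δ hΔH]
  ring
end

section
/- Let $C_X, C_Y$ be symmetric positive semidefinite matrices with descending eigenvalues $(\mu_i)$ and $(\rho_i)$, and set $C = C_X - \gamma C_Y$. If $\gamma < \frac{\sum_{i=d+1}^D \mu_i}{(D-d)\rho_1}$, then $\sum_{i=d+1}^D \lambda_i(C) > 0$, where $\lambda_i(C)$ denotes the $i$-th largest eigenvalue of $C$. -/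
open Matrix Finset

private lemma psd_diag_nonneg {D : ℕ} {M : Matrix (Fin D) (Fin D) ℝ} (hM : M.PosSemidef)
    (j : Fin D) : 0 ≤ M j j := by
  exact hM.diag_nonneg

private lemma card_tail {D d : ℕ} (hd : d ≤ D) :
    (Finset.univ.filter fun i : Fin D => d ≤ (i : ℕ)).card = D - d := by
  have h1 : (Finset.univ.filter fun i : Fin D => (i : ℕ) < d)
      = (Finset.univ : Finset (Fin d)).map (Fin.castLEEmb hd) := by
    ext i
    simp [Fin.castLEEmb, Fin.castLE, Fin.ext_iff]
    constructor
    · intro h; exact ⟨⟨i, h⟩, rfl⟩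
    · rintro ⟨j, hj⟩; omega
  have h2 := Finset.card_filter_add_card_filter_not
    (s := (Finset.univ : Finset (Fin D))) (p := fun i : Fin D => d ≤ (i : ℕ))
  simp only [not_le] at h2
  rw [h1] at h2
  simp at h2
  omega

private lemma sum_ind {D d : ℕ} (hd : d ≤ D) :
    ∑ i : Fin D, (if d ≤ (i : ℕ) then (1:ℝ) else 0) = (D : ℝ) - d := by
  rw [Finset.sum_ite, Finset.sum_const, Finset.sum_const]
  simp [card_tail hd, Nat.cast_sub hd]

private lemma trace_formula {D : ℕ} {A : Matrix (Fin D) (Fin D) ℝ} (hA : A.IsHermitian)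
    (Q : Matrix (Fin D) (Fin D) ℝ) :
    (A * Q).trace = ∑ j, hA.eigenvalues j *
      ((star (hA.eigenvectorUnitary : Matrix (Fin D) (Fin D) ℝ)) * Q *
        (hA.eigenvectorUnitary : Matrix (Fin D) (Fin D) ℝ)) j j := by
  set U := (hA.eigenvectorUnitary : Matrix (Fin D) (Fin D) ℝ) with hU
  have h1 : A = U * diagonal hA.eigenvalues * star U := by
    have := hA.spectral_theorem
    simpa [Function.comp] using this
  calc (A * Q).trace = (U * (diagonal hA.eigenvalues * (star U * Q))).trace := by
        rw [← mul_assoc, ← mul_assoc, ← h1]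
    _ = ((diagonal hA.eigenvalues * (star U * Q)) * U).trace := trace_mul_comm _ _
    _ = (diagonal hA.eigenvalues * (star U * Q * U)).trace := by rw [mul_assoc, mul_assoc]
    _ = ∑ j, hA.eigenvalues j * (star U * Q * U) j j := by
        simp [Matrix.trace, Matrix.diag, diagonal_mul]

private lemma sum_mul_ge {D d : ℕ} (hd : d < D) (μ : Fin D → ℝ) (hμa : Antitone μ)
    (t : Fin D → ℝ) (h0 : ∀ i, 0 ≤ t i) (h1 : ∀ i, t i ≤ 1)
    (hsum : ∑ i, t i = (D : ℝ) - d) :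
    ∑ i ∈ Finset.univ.filter (fun i : Fin D => d ≤ (i : ℕ)), μ i ≤ ∑ i, μ i * t i := by
  set m := μ ⟨d, hd⟩ with hm
  have key : ∀ i : Fin D, m * (t i - if d ≤ (i : ℕ) then 1 else 0)
      ≤ μ i * t i - (if d ≤ (i : ℕ) then μ i else 0) := by
    intro i
    by_cases h : d ≤ (i : ℕ)
    · simp only [h, if_true]
      have hμi : μ i ≤ m := hμa (show (⟨d, hd⟩ : Fin D) ≤ i from h)
      nlinarith [h1 i]
    · simp only [h, if_false]
      have hμi : m ≤ μ i := hμa (show i ≤ (⟨d, hd⟩ : Fin D) from le_of_lt (lt_of_not_ge h))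
      nlinarith [h0 i]
  have hs := Finset.sum_le_sum (fun i (_ : i ∈ Finset.univ) => key i)
  have hind := sum_ind (D := D) hd.le
  rw [Finset.sum_filter]
  have hexp : ∑ i : Fin D, m * (t i - if d ≤ (i : ℕ) then 1 else 0) = 0 := by
    rw [← Finset.mul_sum, Finset.sum_sub_distrib, hsum, hind]; ring
  rw [hexp] at hs
  have := Finset.sum_sub_distrib (s := (Finset.univ : Finset (Fin D)))
    (f := fun i => μ i * t i) (g := fun i => if d ≤ (i : ℕ) then μ i else 0)
  linarith [hs, this]

private lemma M_props {D : ℕ} (V Q : Matrix (Fin D) (Fin D) ℝ)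
    (hV : V ∈ Matrix.unitaryGroup (Fin D) ℝ)
    (hQ : Q.PosSemidef) (h1Q : ((1 : Matrix (Fin D) (Fin D) ℝ) - Q).PosSemidef) :
    (∀ j, 0 ≤ (star V * Q * V) j j) ∧ (∀ j, (star V * Q * V) j j ≤ 1)
      ∧ (star V * Q * V).trace = Q.trace := by
  have hVV : star V * V = 1 := mem_unitaryGroup_iff'.mp hV
  refine ⟨fun j => psd_diag_nonneg (hQ.conjTranspose_mul_mul_same V) j, fun j => ?_, ?_⟩
  · have h : 0 ≤ (star V * ((1 : Matrix (Fin D) (Fin D) ℝ) - Q) * V) j j :=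
      psd_diag_nonneg (h1Q.conjTranspose_mul_mul_same V) j
    have he : star V * ((1 : Matrix (Fin D) (Fin D) ℝ) - Q) * V = 1 - star V * Q * V := by
      rw [mul_sub, sub_mul, mul_one, hVV]
    rw [he] at h
    have h2 : (0:ℝ) ≤ 1 - (star V * Q * V) j j := by
      simpa [Matrix.sub_apply, Matrix.one_apply] using h
    linarith
  · calc (star V * Q * V).trace = (V * (star V * Q)).trace := trace_mul_comm _ _
      _ = Q.trace := by rw [← mul_assoc, mem_unitaryGroup_iff.mp hV, one_mul]

/-- If `γ < (∑_{i>d} μ_i) / ((D-d) ρ_1)`, then the tail eigenvalue sum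
`∑_{i>d} λ_i(C_X - γ C_Y)` is positive (eigenvalues in descending order, zero-based:
the tail ranges over indices `i ≥ d`). -/
theorem stmt19 {D : ℕ} (hD : 0 < D) (d : ℕ) (hd : d < D)
    (CX CY : Matrix (Fin D) (Fin D) ℝ)
    (hX : CX.PosSemidef) (hY : CY.PosSemidef)
    (γ : ℝ) (hγ : 0 ≤ γ)
    (hCH : (CX - γ • CY).IsHermitian)
    (μ ρ lam : Fin D → ℝ)
    (hμa : Antitone μ) (hρa : Antitone ρ) (hlama : Antitone lam)
    (hμe : ∃ e : Equiv.Perm (Fin D), ∀ i, hX.1.eigenvalues (e i) = μ i)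
    (hρe : ∃ e : Equiv.Perm (Fin D), ∀ i, hY.1.eigenvalues (e i) = ρ i)
    (hlame : ∃ e : Equiv.Perm (Fin D), ∀ i, hCH.eigenvalues (e i) = lam i)
    (hγlt : γ < (∑ i ∈ Finset.univ.filter fun i : Fin D => d ≤ (i : ℕ), μ i)
      / (((D : ℝ) - d) * ρ ⟨0, hD⟩)) :
    0 < ∑ i ∈ Finset.univ.filter fun i : Fin D => d ≤ (i : ℕ), lam i := by
  classical
  obtain ⟨eX, hXe⟩ := hμe
  obtain ⟨eY, hYe⟩ := hρe
  obtain ⟨eC, hCe⟩ := hlame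
  have hρ0 : 0 ≤ ρ ⟨0, hD⟩ := by rw [← hYe]; exact hY.eigenvalues_nonneg _
  have hDd : (0:ℝ) < (D:ℝ) - d := by
    have : (d:ℝ) < D := by exact_mod_cast hd
    linarith
  have hρpos : 0 < ρ ⟨0, hD⟩ := by
    rcases hρ0.lt_or_eq with h | h
    · exact h
    · exfalso; rw [← h, mul_zero, div_zero] at hγlt; linarith
  have hγS : γ * (((D:ℝ) - d) * ρ ⟨0, hD⟩)
      < ∑ i ∈ Finset.univ.filter (fun i : Fin D => d ≤ (i : ℕ)), μ i :=
    (lt_div_iff₀ (by positivity)).mp hγlt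
  -- the projection Q onto bottom eigenvectors of C
  set U := (hCH.eigenvectorUnitary : Matrix (Fin D) (Fin D) ℝ) with hUdef
  have hUU : U * star U = 1 := mem_unitaryGroup_iff.mp hCH.eigenvectorUnitary.2
  have hUU' : star U * U = 1 := mem_unitaryGroup_iff'.mp hCH.eigenvectorUnitary.2
  set p : Fin D → ℝ := fun j => if d ≤ ((eC.symm j : Fin D) : ℕ) then 1 else 0 with hpdef
  have hp0 : ∀ j, 0 ≤ p j := fun j => by dsimp [p]; split <;> norm_num
  have hp1 : ∀ j, p j ≤ 1 := fun j => by dsimp [p]; split <;> norm_num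
  set P := diagonal p with hPdef
  set Q := U * P * star U with hQdef
  have hPpsd : P.PosSemidef := PosSemidef.diagonal (fun j => hp0 j)
  have hQpsd : Q.PosSemidef := hPpsd.mul_mul_conjTranspose_same U
  have h1P : ((1 : Matrix (Fin D) (Fin D) ℝ) - P).PosSemidef := by
    have h : (1 : Matrix (Fin D) (Fin D) ℝ) - P = diagonal (fun j => 1 - p j) := by
      rw [hPdef, ← diagonal_one, diagonal_sub]
    rw [h]
    exact PosSemidef.diagonal (fun j => show (0:ℝ) ≤ 1 - p j by linarith [hp1 j])
  have h1Q : ((1 : Matrix (Fin D) (Fin D) ℝ) - Q).PosSemidef := by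
    have h : (1 : Matrix (Fin D) (Fin D) ℝ) - Q = U * (1 - P) * star U := by
      rw [mul_sub, sub_mul, mul_one, hUU]
    rw [h]
    exact h1P.mul_mul_conjTranspose_same U
  have htrP : P.trace = (D:ℝ) - d := by
    rw [hPdef, trace_diagonal]
    rw [← Equiv.sum_comp eC p]
    simpa [p] using sum_ind (D := D) hd.le
  have htrQ : Q.trace = (D:ℝ) - d := by
    calc Q.trace = (star U * (U * P)).trace := trace_mul_comm _ _
      _ = P.trace := by rw [← mul_assoc, hUU', one_mul]
      _ = (D:ℝ) - d := htrP
  -- trace of C * Q equals the tail sum of lam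
  have hMC : star U * Q * U = P := by
    rw [hQdef]
    simp only [← mul_assoc]
    rw [hUU', one_mul, mul_assoc, hUU', mul_one]
  have htrC : ((CX - γ • CY) * Q).trace
      = ∑ i ∈ Finset.univ.filter (fun i : Fin D => d ≤ (i : ℕ)), lam i := by
    rw [trace_formula hCH Q, hMC]
    rw [← Equiv.sum_comp eC (fun j => hCH.eigenvalues j * P j j)]
    rw [Finset.sum_filter]
    refine Finset.sum_congr rfl fun i _ => ?_
    simp [hPdef, p, diagonal_apply_eq, hCe i, mul_ite]
  -- trace of CX * Q is at least the tail sum of μ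
  set VX := (hX.1.eigenvectorUnitary : Matrix (Fin D) (Fin D) ℝ) with hVXdef
  obtain ⟨hX0, hX1, hXtr⟩ := M_props VX Q hX.1.eigenvectorUnitary.2 hQpsd h1Q
  set tX : Fin D → ℝ := fun j => (star VX * Q * VX) j j with htXdef
  have htrCX : ∑ i ∈ Finset.univ.filter (fun i : Fin D => d ≤ (i : ℕ)), μ i
      ≤ (CX * Q).trace := by
    rw [trace_formula hX.1 Q]
    have hre : ∑ j, hX.1.eigenvalues j * tX j = ∑ i, μ i * tX (eX i) := by
      rw [← Equiv.sum_comp eX (fun j => hX.1.eigenvalues j * tX j)]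
      exact Finset.sum_congr rfl fun i _ => by rw [hXe i]
    have hsumt : ∑ i, tX (eX i) = (D:ℝ) - d := by
      rw [Equiv.sum_comp eX tX]
      have : ∑ j, tX j = (star VX * Q * VX).trace := by
        simp [Matrix.trace, Matrix.diag, tX]
      rw [this, hXtr, htrQ]
    have := sum_mul_ge hd μ hμa (fun i => tX (eX i)) (fun i => hX0 (eX i))
      (fun i => hX1 (eX i)) hsumt
    calc ∑ i ∈ Finset.univ.filter (fun i : Fin D => d ≤ (i : ℕ)), μ i
        ≤ ∑ i, μ i * tX (eX i) := this
      _ = ∑ j, hX.1.eigenvalues j * tX j := hre.symm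
  -- trace of CY * Q is at most ρ₀ * (D - d)
  set VY := (hY.1.eigenvectorUnitary : Matrix (Fin D) (Fin D) ℝ) with hVYdef
  obtain ⟨hY0, hY1, hYtr⟩ := M_props VY Q hY.1.eigenvectorUnitary.2 hQpsd h1Q
  set tY : Fin D → ℝ := fun j => (star VY * Q * VY) j j with htYdef
  have htrCY : (CY * Q).trace ≤ ρ ⟨0, hD⟩ * ((D:ℝ) - d) := by
    rw [trace_formula hY.1 Q]
    have hbd : ∀ j, hY.1.eigenvalues j * tY j ≤ ρ ⟨0, hD⟩ * tY j := by
      intro j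
      have h1 : hY.1.eigenvalues j = ρ (eY.symm j) := by
        have := hYe (eY.symm j); simpa using this
      have h2 : ρ (eY.symm j) ≤ ρ ⟨0, hD⟩ := hρa (by simp [Fin.le_def])
      rw [h1]
      exact mul_le_mul_of_nonneg_right h2 (hY0 j)
    have hsumt : ∑ j, tY j = (D:ℝ) - d := by
      have : ∑ j, tY j = (star VY * Q * VY).trace := by
        simp [Matrix.trace, Matrix.diag, tY]
      rw [this, hYtr, htrQ]
    calc ∑ j, hY.1.eigenvalues j * tY j ≤ ∑ j, ρ ⟨0, hD⟩ * tY j :=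
        Finset.sum_le_sum fun j _ => hbd j
      _ = ρ ⟨0, hD⟩ * ((D:ℝ) - d) := by rw [← Finset.mul_sum, hsumt]
  -- combine
  have hlin : ((CX - γ • CY) * Q).trace = (CX * Q).trace - γ * (CY * Q).trace := by
    rw [sub_mul, smul_mul_assoc, trace_sub, trace_smul, smul_eq_mul]
  have h5 : γ * (CY * Q).trace ≤ γ * (ρ ⟨0, hD⟩ * ((D:ℝ) - d)) :=
    mul_le_mul_of_nonneg_left htrCY hγ
  have h6 : γ * (((D:ℝ) - d) * ρ ⟨0, hD⟩) = γ * (ρ ⟨0, hD⟩ * ((D:ℝ) - d)) := by ring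
  rw [← htrC, hlin]
  linarith [hγS, htrCX, h5]
end
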